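/- arXiv:1909.10032 — 3 statements merged into one kernel-verified Lean document; each statement's English description precedes it below -/
import Mathlib

section
/- Let m ≥ 1 and let G be the group presented by generators g_1, …, g_m with relations [g_i, g_{i+1}] = 1 for i = 1, …, m−1. Let C ⊆ {g_1,…,g_m, g_1⁻¹,…,g_m⁻¹} be closed under inverses, and let G_C be the subgroup of G generated by C. If (x_1,…,x_N) is a reduced word (i.e., for every pair u < v with x_u·x_v = 1, there exists w with u < w < v such that x_w does not commute with x_u in G), then x_1⋯x_N ∈ G_C if and only if every letter x_i lies in C. -/
/-- The commutation relations `[g_i, g_{i+1}] = 1` (as elements of the free group on `Fin m`)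
presenting the right-angled Artin group on the path graph with `m` vertices. -/
def pathRels (m : ℕ) : Set (FreeGroup (Fin m)) :=
  {r | ∃ i j : Fin m, (i : ℕ) + 1 = (j : ℕ) ∧
    r = FreeGroup.of i * FreeGroup.of j * (FreeGroup.of i)⁻¹ * (FreeGroup.of j)⁻¹}

/-- The group `⟨g_1, …, g_m ∣ [g_i, g_{i+1}] = 1⟩`. -/
abbrev PathGroup (m : ℕ) := PresentedGroup (pathRels m)

/-- The generator `g_i` of `PathGroup m`. -/
def pathGen (m : ℕ) (i : Fin m) : PathGroup m := PresentedGroup.of i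


/-- The set of letters: the generators of `PathGroup m` and their inverses. -/
def pathLetters (m : ℕ) : Set (PathGroup m) :=
  {x | ∃ i : Fin m, x = pathGen m i ∨ x = (pathGen m i)⁻¹}

namespace Stmt15Aux

variable {m : ℕ}

abbrev L (m : ℕ) := Fin m × Bool

def linv (a : L m) : L m := (a.1, !a.2)

@[simp] lemma linv_linv (a : L m) : linv (linv a) = a := by simp [linv]

@[simp] lemma linv_fst (a : L m) : (linv a).1 = a.1 := rfl

def lcomm (a b : L m) : Prop := (a.1 : ℕ) ≤ (b.1 : ℕ) + 1 ∧ (b.1 : ℕ) ≤ (a.1 : ℕ) + 1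

lemma lcomm.symm {a b : L m} (h : lcomm a b) : lcomm b a := ⟨h.2, h.1⟩

@[simp] lemma lcomm_linv_left (a b : L m) : lcomm (linv a) b ↔ lcomm a b := Iff.rfl
@[simp] lemma lcomm_linv_right (a b : L m) : lcomm a (linv b) ↔ lcomm a b := Iff.rfl

lemma lcomm_of_fst_eq {a b : L m} (h : a.1 = b.1) : lcomm a b := by
  constructor <;> simp [h]

def toG (a : L m) : PathGroup m := if a.2 then pathGen m a.1 else (pathGen m a.1)⁻¹

@[simp] lemma toG_linv (a : L m) : toG (linv a) = (toG a)⁻¹ := by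
  rcases a with ⟨i, b⟩; cases b <;> simp [toG, linv]

lemma pathGen_comm {i j : Fin m} (hij : (i : ℕ) + 1 = (j : ℕ)) :
    Commute (pathGen m i) (pathGen m j) := by
  have hr : (FreeGroup.of i * FreeGroup.of j * (FreeGroup.of i)⁻¹ * (FreeGroup.of j)⁻¹)
      ∈ pathRels m := ⟨i, j, hij, rfl⟩
  have h1 : (PresentedGroup.mk (pathRels m))
      (FreeGroup.of i * FreeGroup.of j * (FreeGroup.of i)⁻¹ * (FreeGroup.of j)⁻¹) = 1 := by
    exact (QuotientGroup.eq_one_iff _).mpr (Subgroup.subset_normalClosure hr)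
  rw [← commutatorElement_eq_one_iff_commute]
  simpa [commutatorElement_def, pathGen, PresentedGroup.of, map_mul, map_inv] using h1

lemma toG_commute {a b : L m} (h : lcomm a b) : Commute (toG a) (toG b) := by
  have hbase : Commute (pathGen m a.1) (pathGen m b.1) := by
    rcases lt_trichotomy (a.1 : ℕ) (b.1 : ℕ) with hlt | heq | hgt
    · have : (a.1 : ℕ) + 1 = (b.1 : ℕ) := by rcases h with ⟨h1, h2⟩; omega
      exact pathGen_comm this
    · have : a.1 = b.1 := Fin.ext heq
      rw [this]
    · have : (b.1 : ℕ) + 1 = (a.1 : ℕ) := by rcases h with ⟨h1, h2⟩; omega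
      exact (pathGen_comm this).symm
  rcases a with ⟨i, ba⟩; rcases b with ⟨j, bb⟩
  cases ba <;> cases bb <;> simp only [toG] <;> simp at hbase ⊢ <;>
    first
      | exact hbase
      | exact hbase.inv_left
      | exact hbase.inv_right
      | exact hbase.inv_left.inv_right


def eval (w : List (L m)) : PathGroup m := (w.map toG).prod

@[simp] lemma eval_nil : eval ([] : List (L m)) = 1 := rfl

@[simp] lemma eval_cons (x : L m) (t : List (L m)) : eval (x :: t) = toG x * eval t := by
  simp [eval]

lemma eval_append (u v : List (L m)) : eval (u ++ v) = eval u * eval v := by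
  simp [eval]

/-- Swap equivalence: words related by swapping adjacent commuting letters. -/
inductive E : List (L m) → List (L m) → Prop
  | nil : E [] []
  | cons (x : L m) {t t' : List (L m)} : E t t' → E (x :: t) (x :: t')
  | swap {x y : L m} (h : lcomm x y) {t t' : List (L m)} : E t t' → E (x :: y :: t) (y :: x :: t')
  | trans {u v w : List (L m)} : E u v → E v w → E u w

lemma E.refl : ∀ w : List (L m), E w w
  | [] => E.nil
  | x :: t => E.cons x (E.refl t)

lemma E.symm {u v : List (L m)} (h : E u v) : E v u := by
  induction h with
  | nil => exact E.nil
  | cons x _ ih => exact E.cons x ih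
  | swap h _ ih => exact E.swap h.symm ih
  | trans _ _ ih1 ih2 => exact ih2.trans ih1

lemma E.length_eq {u v : List (L m)} (h : E u v) : u.length = v.length := by
  induction h with
  | nil => rfl
  | cons x _ ih => simp [ih]
  | swap h _ ih => simp [ih]
  | trans _ _ ih1 ih2 => omega

lemma E.eval_eq {u v : List (L m)} (h : E u v) : eval u = eval v := by
  induction h with
  | nil => rfl
  | cons x _ ih => simp [ih]
  | swap h _ ih => simp only [eval_cons, ih, ← mul_assoc]
                   rw [(toG_commute h).eq]
  | trans _ _ ih1 ih2 => rw [ih1, ih2]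

lemma E.append_left {u v : List (L m)} (p : List (L m)) (h : E u v) : E (p ++ u) (p ++ v) := by
  induction p with
  | nil => exact h
  | cons c p ih => exact E.cons c ih

/-- move a letter commuting with everything before it to the front -/
lemma E.move_front {p : List (L m)} {a : L m} (s : List (L m)) (hp : ∀ z ∈ p, lcomm z a) :
    E (p ++ a :: s) (a :: (p ++ s)) := by
  induction p with
  | nil => exact E.refl _
  | cons c p ih =>
    have h1 : E (c :: (p ++ a :: s)) (c :: a :: (p ++ s)) :=
      E.cons c (ih (fun z hz => hp z (List.mem_cons_of_mem _ hz)))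
    exact h1.trans (E.swap (hp c (List.mem_cons_self)) (E.refl _))

/-- Key extraction lemma: a letter that can be moved to a given position can be tracked
through swap equivalence. -/
lemma E.extract {v w : List (L m)} (h : E v w) :
    ∀ {p : List (L m)} {a : L m} {s : List (L m)}, v = p ++ a :: s → (∀ z ∈ p, lcomm z a) →
      ∃ q r, w = q ++ a :: r ∧ (∀ z ∈ q, lcomm z a) ∧ E (p ++ s) (q ++ r) := by
  induction h with
  | nil =>
    intro p a s hv _; exact absurd hv (by simp)
  | @cons x t t' hE ih =>
    intro p a s hv hp
    cases p with
    | nil =>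
      simp only [List.nil_append] at hv
      obtain ⟨rfl, rfl⟩ : x = a ∧ t = s := ⟨(List.cons.injEq ..).mp hv |>.1,
        (List.cons.injEq ..).mp hv |>.2⟩
      exact ⟨[], t', rfl, by simp, hE⟩
    | cons c pp =>
      simp only [List.cons_append, List.cons.injEq] at hv
      obtain ⟨rfl, hv2⟩ := hv
      obtain ⟨qq, r, rfl, hq, he⟩ := ih hv2 (fun z hz => hp z (List.mem_cons_of_mem _ hz))
      refine ⟨x :: qq, r, rfl, ?_, ?_⟩
      · intro z hz
        rcases List.mem_cons.mp hz with rfl | hz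
        · exact hp z (List.mem_cons_self)
        · exact hq z hz
      · exact E.cons x he
  | @swap x y hxy t t' hE ih =>
    intro p a s hv hp
    cases p with
    | nil =>
      simp only [List.nil_append, List.cons.injEq] at hv
      obtain ⟨rfl, rfl⟩ := hv
      refine ⟨[y], t', rfl, ?_, ?_⟩
      · intro z hz; simp at hz; subst hz; exact hxy.symm
      · exact E.cons y hE
    | cons c pp =>
      cases pp with
      | nil =>
        simp only [List.cons_append, List.nil_append, List.cons.injEq] at hv
        obtain ⟨rfl, rfl, rfl⟩ := hv
        exact ⟨[], x :: t', rfl, by simp, E.cons x hE⟩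
      | cons d p₂ =>
        simp only [List.cons_append, List.cons.injEq] at hv
        obtain ⟨rfl, rfl, hv3⟩ := hv
        obtain ⟨qq, r, rfl, hq, he⟩ := ih hv3
          (fun z hz => hp z (List.mem_cons_of_mem _ (List.mem_cons_of_mem _ hz)))
        refine ⟨y :: x :: qq, r, rfl, ?_, ?_⟩
        · intro z hz
          rcases List.mem_cons.mp hz with rfl | hz
          · exact hp z (List.mem_cons_of_mem _ (List.mem_cons_self))
          · rcases List.mem_cons.mp hz with rfl | hz
            · exact hp z (List.mem_cons_self)
            · exact hq z hz
        · exact E.swap hxy he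
  | @trans u v w h1 h2 ih1 ih2 =>
    intro p a s hv hp
    obtain ⟨q, r, rfl, hq, he1⟩ := ih1 hv hp
    obtain ⟨q', r', rfl, hq', he2⟩ := ih2 rfl hq
    exact ⟨q', r', rfl, hq', he1.trans he2⟩

lemma E.cancel {a : L m} {u v : List (L m)} (h : E (a :: u) (a :: v)) : E u v := by
  obtain ⟨q, r, hw, hq, he⟩ := h.extract (p := []) rfl (by simp)
  cases q with
  | nil =>
    simp only [List.nil_append, List.cons.injEq] at hw
    obtain ⟨-, rfl⟩ := hw
    simpa using he
  | cons c qq =>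
    simp only [List.cons_append, List.cons.injEq] at hw
    obtain ⟨rfl, rfl⟩ := hw
    have h2 : E (qq ++ a :: r) (a :: (qq ++ r)) :=
      E.move_front r (fun z hz => hq z (List.mem_cons_of_mem _ hz))
    simp only [List.nil_append] at he
    exact (he.trans h2.symm)

lemma E.two_heads {x y : L m} (hxy : x ≠ y) {u v : List (L m)} (h : E (x :: u) (y :: v)) :
    lcomm x y ∧ ∃ z, E u (y :: z) ∧ E v (x :: z) := by
  obtain ⟨q, r, hw, hq, he⟩ := h.extract (p := []) rfl (by simp)
  cases q with
  | nil =>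
    simp only [List.nil_append, List.cons.injEq] at hw
    exact absurd hw.1.symm hxy
  | cons c qq =>
    simp only [List.cons_append, List.cons.injEq] at hw
    obtain ⟨rfl, rfl⟩ := hw
    refine ⟨(hq y (List.mem_cons_self)).symm, qq ++ r, by simpa using he, ?_⟩
    exact E.move_front r (fun z hz => hq z (List.mem_cons_of_mem _ hz))


/-- Combinatorial reducedness. -/
def Red (w : List (L m)) : Prop :=
  ∀ p (x : L m) q s, w = p ++ x :: (q ++ linv x :: s) → ∃ z ∈ q, ¬ lcomm z x

lemma red_nil : Red ([] : List (L m)) := by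
  intro p x q s h; exact absurd h (by simp)

lemma Red.tail {x : L m} {t : List (L m)} (h : Red (x :: t)) : Red t := by
  intro p y q s ht
  exact h (x :: p) y q s (by simp [ht])

/-- `x` has a cancelling partner reachable to the front of `t`. -/
def HC (x : L m) (t : List (L m)) : Prop :=
  ∃ p s, t = p ++ linv x :: s ∧ ∀ z ∈ p, lcomm z x

lemma hc_iff_cancel {x : L m} {t : List (L m)} :
    HC x t ↔ ∃ t', E t (linv x :: t') := by
  constructor
  · rintro ⟨p, s, rfl, hp⟩
    exact ⟨p ++ s, E.move_front s (fun z hz => hp z hz)⟩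
  · rintro ⟨t', ht⟩
    obtain ⟨q, r, hw, hq, -⟩ := ht.symm.extract (p := []) rfl (by simp)
    exact ⟨q, r, hw, fun z hz => hq z hz⟩

lemma hc_of_E {x : L m} {t t' : List (L m)} (h : E t t') (hc : HC x t') : HC x t := by
  rw [hc_iff_cancel] at hc ⊢
  obtain ⟨s, hs⟩ := hc
  exact ⟨s, h.trans hs⟩

lemma red_cons_iff {x : L m} {t : List (L m)} : Red (x :: t) ↔ Red t ∧ ¬ HC x t := by
  constructor
  · intro h
    refine ⟨h.tail, ?_⟩
    rintro ⟨p, s, rfl, hp⟩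
    obtain ⟨z, hz, hnc⟩ := h [] x p s rfl
    exact hnc (hp z hz)
  · rintro ⟨hred, hhc⟩
    intro p y q s hdec
    cases p with
    | nil =>
      simp only [List.nil_append, List.cons.injEq] at hdec
      obtain ⟨rfl, rfl⟩ := hdec
      by_contra hcon
      push_neg at hcon
      exact hhc ⟨q, s, rfl, hcon⟩
    | cons c pp =>
      simp only [List.cons_append, List.cons.injEq] at hdec
      exact hred pp y q s hdec.2

lemma not_red_cons_cons {x : L m} (t : List (L m)) : ¬ Red (x :: linv x :: t) := by
  intro h
  obtain ⟨z, hz, -⟩ := h [] x [] t rfl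
  simp at hz

lemma E.red {v w : List (L m)} (h : E v w) (hv : Red v) : Red w := by
  induction h with
  | nil => exact hv
  | @cons x t t' hE ih =>
    rw [red_cons_iff] at hv ⊢
    exact ⟨ih hv.1, fun hc => hv.2 (hc_of_E hE hc)⟩
  | @swap x y hxy t t' hE ih =>
    rw [red_cons_iff] at hv
    obtain ⟨hyt, hhcx⟩ := hv
    rw [red_cons_iff] at hyt
    obtain ⟨ht, hhcy⟩ := hyt
    have hxny : x ≠ linv y := by
      rintro rfl
      exact hhcx ⟨[], t, by simp, by simp⟩
    rw [red_cons_iff, red_cons_iff]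
    refine ⟨⟨ih ht, ?_⟩, ?_⟩
    · intro hc
      have : HC x t := hc_of_E hE hc
      obtain ⟨p, s, rfl, hp⟩ := this
      refine hhcx ⟨y :: p, s, rfl, ?_⟩
      intro z hz
      rcases List.mem_cons.mp hz with rfl | hz
      · exact hxy.symm
      · exact hp z hz
    · rintro ⟨p, s, hdec, hp⟩
      cases p with
      | nil =>
        simp only [List.nil_append, List.cons.injEq] at hdec
        exact hxny hdec.1
      | cons c pp =>
        simp only [List.cons_append, List.cons.injEq] at hdec
        obtain ⟨rfl, hdec2⟩ := hdec
        have : HC y t' := ⟨pp, s, hdec2, fun z hz => hp z (List.mem_cons_of_mem _ hz)⟩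
        exact hhcy (hc_of_E hE this)
  | trans h1 h2 ih1 ih2 => exact ih2 (ih1 hv)


abbrev RW (m : ℕ) := {w : List (L m) // Red w}

instance redSetoid (m : ℕ) : Setoid (RW m) :=
  ⟨fun a b => E a.1 b.1, fun a => E.refl a.1, E.symm, E.trans⟩

abbrev Q (m : ℕ) := Quotient (redSetoid m)

lemma red_cons_of_not_cancel {ℓ : L m} {w : List (L m)} (hw : Red w)
    (h : ¬ ∃ t, E w (linv ℓ :: t)) : Red (ℓ :: w) :=
  red_cons_iff.mpr ⟨hw, fun hc => h (hc_iff_cancel.mp hc)⟩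

lemma red_of_cancel {ℓ : L m} {w t : List (L m)} (hw : Red w) (h : E w (linv ℓ :: t)) :
    Red t := (h.red hw).tail

open Classical in
noncomputable def actF (ℓ : L m) (w : RW m) : Q m :=
  if h : ∃ t, E w.1 (linv ℓ :: t) then
    ⟦⟨h.choose, red_of_cancel w.2 h.choose_spec⟩⟧
  else ⟦⟨ℓ :: w.1, red_cons_of_not_cancel w.2 h⟩⟧

noncomputable def act (ℓ : L m) : Q m → Q m :=
  Quotient.lift (actF ℓ) (by
    intro a b hab
    change E a.1 b.1 at hab
    by_cases h : ∃ t, E a.1 (linv ℓ :: t)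
    · have h' : ∃ t, E b.1 (linv ℓ :: t) := by
        obtain ⟨t, ht⟩ := h; exact ⟨t, hab.symm.trans ht⟩
      rw [actF, actF, dif_pos h, dif_pos h']
      apply Quotient.sound
      change E _ _
      exact E.cancel (m := m) (a := linv ℓ)
        ((h.choose_spec.symm.trans hab).trans h'.choose_spec)
    · have h' : ¬ ∃ t, E b.1 (linv ℓ :: t) := by
        rintro ⟨t, ht⟩; exact h ⟨t, hab.trans ht⟩
      rw [actF, actF, dif_neg h, dif_neg h']
      exact Quotient.sound (E.cons ℓ hab))

lemma act_mk_cancel {ℓ : L m} {w : RW m} {t : List (L m)} (ht : Red t)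
    (h : E w.1 (linv ℓ :: t)) : act ℓ ⟦w⟧ = ⟦⟨t, ht⟩⟧ := by
  have hex : ∃ t, E w.1 (linv ℓ :: t) := ⟨t, h⟩
  show actF ℓ w = _
  rw [actF, dif_pos hex]
  exact Quotient.sound (E.cancel ((hex.choose_spec.symm.trans h)))

lemma act_mk_cons {ℓ : L m} {w : RW m} (h : ¬ ∃ t, E w.1 (linv ℓ :: t)) :
    act ℓ ⟦w⟧ = ⟦⟨ℓ :: w.1, red_cons_of_not_cancel w.2 h⟩⟧ := by
  show actF ℓ w = _
  rw [actF, dif_neg h]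

lemma act_linv_act (ℓ : L m) (q : Q m) : act ℓ (act (linv ℓ) q) = q := by
  induction q using Quotient.ind with
  | _ w =>
    by_cases hc : ∃ t, E w.1 (ℓ :: t)
    · obtain ⟨t, ht⟩ := hc
      have htr : Red (ℓ :: t) := ht.red w.2
      have h1 : act (linv ℓ) ⟦w⟧ = ⟦⟨t, htr.tail⟩⟧ :=
        act_mk_cancel htr.tail (by rw [linv_linv]; exact ht)
      rw [h1]
      have h2 : ¬ ∃ s, E t (linv ℓ :: s) := by
        rintro ⟨s, hs⟩
        have : E w.1 (ℓ :: linv ℓ :: s) := ht.trans (E.cons ℓ hs)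
        exact not_red_cons_cons s (this.red w.2)
      rw [act_mk_cons (w := ⟨t, htr.tail⟩) h2]
      exact Quotient.sound (ht.symm : E (ℓ :: t) w.1)
    · have hc' : ¬ ∃ t, E w.1 (linv (linv ℓ) :: t) := by rw [linv_linv]; exact hc
      rw [act_mk_cons hc']
      exact act_mk_cancel w.2 (E.refl _)

noncomputable def permOf (ℓ : L m) : Equiv.Perm (Q m) where
  toFun := act ℓ
  invFun := act (linv ℓ)
  left_inv := fun q => by
    have := act_linv_act (linv ℓ) q
    rwa [linv_linv] at this
  right_inv := fun q => act_linv_act ℓ q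

@[simp] lemma permOf_apply (ℓ : L m) (q : Q m) : permOf ℓ q = act ℓ q := rfl

lemma permOf_linv (ℓ : L m) : permOf (linv ℓ) = (permOf ℓ)⁻¹ := by
  ext q
  rfl


lemma act_comm {a b : L m} (hab : lcomm a b) (hne : a.1 ≠ b.1) (q : Q m) :
    act a (act b q) = act b (act a q) := by
  have hba : lcomm b a := hab.symm
  have hinvab : lcomm (linv a) (linv b) := hab
  induction q using Quotient.ind with
  | _ w =>
    by_cases hb : ∃ t, E w.1 (linv b :: t)
    · obtain ⟨t, ht⟩ := hb
      have htr : Red (linv b :: t) := ht.red w.2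
      have hRt : Red t := htr.tail
      rw [act_mk_cancel hRt ht]
      by_cases ha' : ∃ s, E t (linv a :: s)
      · -- B1a
        obtain ⟨s, hs⟩ := ha'
        have hsr : Red (linv a :: s) := hs.red hRt
        rw [act_mk_cancel (w := ⟨t, hRt⟩) hsr.tail hs]
        -- other side
        have hwa : E w.1 (linv a :: (linv b :: s)) := by
          refine ht.trans ?_
          exact (E.cons (linv b) hs).trans (E.swap (x := linv b) (y := linv a) hba (E.refl s))
        have hbs : Red (linv b :: s) := (hwa.red w.2).tail
        rw [act_mk_cancel hbs hwa]
        rw [act_mk_cancel (t := s) hbs.tail (E.refl _)]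
      · -- B1b
        have hRat : Red (a :: t) := red_cons_of_not_cancel hRt ha'
        rw [act_mk_cons (w := ⟨t, hRt⟩) ha']
        have hwa : ¬ ∃ s, E w.1 (linv a :: s) := by
          rintro ⟨s, hs⟩
          have h2 : E (linv b :: t) (linv a :: s) := ht.symm.trans hs
          have hne' : linv b ≠ linv a := by
            intro h; exact hne ((by simpa using congrArg Prod.fst h : b.1 = a.1)).symm
          obtain ⟨-, z, hz1, -⟩ := h2.two_heads hne'
          exact ha' ⟨z, hz1⟩
        rw [act_mk_cons hwa]
        have hkey : E (a :: w.1) (linv b :: (a :: t)) :=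
          (E.cons a ht).trans (E.swap (x := a) (y := linv b) hab (E.refl t))
        rw [act_mk_cancel (w := ⟨a :: w.1, _⟩) hRat hkey]
    · rw [act_mk_cons hb]
      by_cases ha : ∃ s, E w.1 (linv a :: s)
      · -- B2a
        obtain ⟨s, hs⟩ := ha
        have hss : Red (linv a :: s) := hs.red w.2
        rw [act_mk_cancel hss.tail hs]
        have hnc : ¬ ∃ u, E s (linv b :: u) := by
          rintro ⟨u, hu⟩
          refine hb ⟨linv a :: u, ?_⟩
          exact (hs.trans (E.cons _ hu)).trans (E.swap (x := linv a) (y := linv b) hab (E.refl u))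
        rw [act_mk_cons (w := ⟨s, hss.tail⟩) hnc]
        have hkey : E (b :: w.1) (linv a :: (b :: s)) :=
          (E.cons b hs).trans (E.swap (x := b) (y := linv a) hba (E.refl s))
        have hbsr : Red (b :: s) := (hkey.red (red_cons_of_not_cancel w.2 hb)).tail
        rw [act_mk_cancel (w := ⟨b :: w.1, _⟩) hbsr hkey]
      · -- B2b
        rw [act_mk_cons ha]
        have h1 : ¬ ∃ u, E (b :: w.1) (linv a :: u) := by
          rintro ⟨u, hu⟩
          have hne' : b ≠ linv a := by
            intro h; exact hne (by simpa using (congrArg Prod.fst h).symm)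
          obtain ⟨-, z, hz1, -⟩ := hu.two_heads hne'
          exact ha ⟨z, hz1⟩
        have h2 : ¬ ∃ u, E (a :: w.1) (linv b :: u) := by
          rintro ⟨u, hu⟩
          have hne' : a ≠ linv b := by
            intro h; exact hne (by simpa using congrArg Prod.fst h)
          obtain ⟨-, z, hz1, -⟩ := hu.two_heads hne'
          exact hb ⟨z, hz1⟩
        rw [act_mk_cons (w := ⟨b :: w.1, _⟩) h1]
        rw [act_mk_cons (w := ⟨a :: w.1, _⟩) h2]
        exact Quotient.sound ((E.swap hab (E.refl w.1)) : E (a :: b :: w.1) (b :: a :: w.1))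


lemma permOf_commute {a b : L m} (hab : lcomm a b) (hne : a.1 ≠ b.1) :
    Commute (permOf a) (permOf b) := by
  apply Equiv.ext
  intro q
  simp only [Equiv.Perm.mul_apply, permOf_apply]
  exact act_comm hab hne q

noncomputable def phi : PathGroup m →* Equiv.Perm (Q m) :=
  PresentedGroup.toGroup (f := fun i => permOf ((i, true) : L m)) (by
    rintro r ⟨i, j, hij, rfl⟩
    have hc : Commute (permOf ((i, true) : L m)) (permOf ((j, true) : L m)) := by
      apply permOf_commute
      · show (i : ℕ) ≤ (j : ℕ) + 1 ∧ (j : ℕ) ≤ (i : ℕ) + 1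
        omega
      · show i ≠ j
        intro h
        subst h
        omega
    have := commutatorElement_eq_one_iff_commute.mpr hc
    simpa [commutatorElement_def, map_mul, map_inv] using this)

lemma phi_toG (ℓ : L m) : phi (toG ℓ) = permOf ℓ := by
  rcases ℓ with ⟨i, b⟩
  cases b
  · show phi ((pathGen m i)⁻¹) = _
    rw [map_inv]
    have h1 : phi (pathGen m i) = permOf ((i, true) : L m) :=
      PresentedGroup.toGroup.of _
    rw [h1, ← permOf_linv]
    rfl
  · exact PresentedGroup.toGroup.of _

lemma phi_eval {w : List (L m)} (hw : Red w) :
    phi (eval w) ⟦(⟨[], red_nil⟩ : RW m)⟧ = ⟦(⟨w, hw⟩ : RW m)⟧ := by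
  induction w with
  | nil => rw [eval_nil, map_one, Equiv.Perm.one_apply]
  | cons ℓ t ih =>
    have hRt : Red t := hw.tail
    rw [eval_cons, map_mul, Equiv.Perm.mul_apply, ih hRt, phi_toG, permOf_apply]
    rw [act_mk_cons (w := ⟨t, hRt⟩) (by
      rintro ⟨s, hs⟩
      exact (red_cons_iff.mp hw).2 (hc_iff_cancel.mpr ⟨s, hs⟩))]

/-- Uniqueness: reduced words representing the same element are swap-equivalent. -/
lemma red_unique {w v : List (L m)} (hw : Red w) (hv : Red v) (h : eval w = eval v) :
    E w v := by
  have := phi_eval hw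
  rw [h, phi_eval hv] at this
  exact E.symm (Quotient.exact this)

/-- Every word can be reduced without increasing length or changing its value. -/
lemma exists_red (w : List (L m)) :
    ∃ v, Red v ∧ eval v = eval w ∧ v.length ≤ w.length := by
  generalize hn : w.length = n
  induction n using Nat.strong_induction_on generalizing w with
  | _ n ih =>
    subst hn
    by_cases hred : Red w
    · exact ⟨w, hred, rfl, le_rfl⟩
    · rw [Red] at hred
      push_neg at hred
      obtain ⟨p, x, q, s, hdec, hq⟩ := hred
      have heval : eval w = eval (p ++ (q ++ s)) := by
        subst hdec
        rw [eval_append, eval_append, eval_cons, eval_append, eval_cons]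
        have hcomm : Commute (toG x) (eval q) := by
          apply Commute.list_prod_right
          intro y hy
          obtain ⟨z, hz, rfl⟩ := List.mem_map.mp hy
          exact (toG_commute (hq z hz)).symm
        rw [toG_linv]
        have h3 : toG x * (eval q * ((toG x)⁻¹ * eval s)) = eval q * eval s := by
          rw [← mul_assoc, ← mul_assoc, hcomm.eq, mul_assoc, mul_assoc, mul_inv_cancel_left]
        rw [h3, eval_append]
      have hlen : (p ++ (q ++ s)).length < w.length := by
        subst hdec; simp
      obtain ⟨v, hv1, hv2, hv3⟩ := ih _ hlen _ rfl
      exact ⟨v, hv1, hv2.trans heval.symm, by omega⟩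


open Classical in
noncomputable def rho (S : Set (Fin m)) : PathGroup m →* PathGroup m :=
  PresentedGroup.toGroup (f := fun i => if i ∈ S then pathGen m i else 1) (by
    rintro r ⟨i, j, hij, rfl⟩
    have hc : Commute (if i ∈ S then pathGen m i else 1) (if j ∈ S then pathGen m j else 1) := by
      split <;> split
      · exact pathGen_comm hij
      · exact Commute.one_right _
      · exact Commute.one_left _
      · exact Commute.one_left _
    simpa [commutatorElement_def, map_mul, map_inv] using
      commutatorElement_eq_one_iff_commute.mpr hc)

open Classical in
lemma rho_toG (S : Set (Fin m)) (ℓ : L m) :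
    rho S (toG ℓ) = if ℓ.1 ∈ S then toG ℓ else 1 := by
  rcases ℓ with ⟨i, b⟩
  cases b
  · show rho S ((pathGen m i)⁻¹) = _
    rw [map_inv]
    have h1 : rho S (pathGen m i) = if i ∈ S then pathGen m i else 1 :=
      PresentedGroup.toGroup.of _
    rw [h1]
    split <;> simp [toG]
  · show rho S (pathGen m i) = _
    have h1 : rho S (pathGen m i) = if i ∈ S then pathGen m i else 1 :=
      PresentedGroup.toGroup.of _
    rw [h1]
    split <;> simp [toG]

open Classical in
lemma rho_eval (S : Set (Fin m)) (w : List (L m)) :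
    rho S (eval w) = eval (w.filter (fun ℓ => decide (ℓ.1 ∈ S))) := by
  induction w with
  | nil => simp
  | cons ℓ t ih =>
    rw [eval_cons, map_mul, ih, rho_toG, List.filter_cons]
    by_cases h : ℓ.1 ∈ S
    · simp [h]
    · simp [h]

open Classical in
lemma rho_fix {C : Set (PathGroup m)} (hC : C ⊆ pathLetters m) (hCinv : ∀ x ∈ C, x⁻¹ ∈ C)
    {g : PathGroup m} (hg : g ∈ Subgroup.closure C) :
    rho {i | pathGen m i ∈ C} g = g := by
  induction hg using Subgroup.closure_induction with
  | mem x hx =>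
    obtain ⟨i, hi | hi⟩ := hC hx
    · have hiS : i ∈ {i | pathGen m i ∈ C} := by rw [Set.mem_setOf_eq, ← hi]; exact hx
      have hx2 : x = toG ((i, true) : L m) := hi
      rw [hx2, rho_toG]
      exact if_pos hiS
    · have hxc : pathGen m i ∈ C := by
        have := hCinv x hx
        rwa [hi, inv_inv] at this
      have hiS : i ∈ {i | pathGen m i ∈ C} := hxc
      have hx2 : x = toG ((i, false) : L m) := by rw [hi]; rfl
      rw [hx2, rho_toG]
      exact if_pos hiS
  | one => exact map_one _
  | mul x y _ _ hx hy => rw [map_mul, hx, hy]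
  | inv x _ hx => rw [map_inv, hx]

lemma getElem?_mid (p s : List (L m)) (x : L m) : (p ++ x :: s)[p.length]? = some x := by
  rw [List.getElem?_append_right (le_refl _)]
  simp

lemma getElem?_mid2 (p s : List (L m)) (x : L m) (k : ℕ) :
    (p ++ x :: s)[p.length + 1 + k]? = s[k]? := by
  rw [List.getElem?_append_right (by omega)]
  have h : p.length + 1 + k - p.length = k + 1 := by omega
  rw [h, List.getElem?_cons_succ]


open Classical in
lemma rho_eval_exists (S : Set (Fin m)) (w : List (L m)) :
    ∃ F : List (L m), rho S (eval w) = eval F ∧ F.length ≤ w.length ∧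
      (F.length = w.length → ∀ ℓ ∈ w, ℓ.1 ∈ S) := by
  refine ⟨w.filter (fun ℓ => decide (ℓ.1 ∈ S)), rho_eval S w, List.length_filter_le _ _, ?_⟩
  intro hlen ℓ hℓ
  have := List.filter_eq_self.mp (List.Sublist.eq_of_length (List.filter_sublist (l := w)) hlen) ℓ hℓ
  simpa using this

end Stmt15Aux

/-- Subgroup membership criterion for reduced words: let `C` be a set of letters closed under
inverses and `G_C = ⟨C⟩`.  If `(x_1, …, x_N)` is a reduced word (whenever `x_u · x_v = 1` with
`u < v`, some intermediate letter fails to commute with `x_u`), then `x_1 ⋯ x_N ∈ G_C` iff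
every letter lies in `C`. -/
theorem stmt15 (m : ℕ) (hm : 1 ≤ m) (C : Set (PathGroup m))
    (hC : C ⊆ pathLetters m) (hCinv : ∀ x ∈ C, x⁻¹ ∈ C)
    (N : ℕ) (w : Fin N → PathGroup m) (hw : ∀ i, w i ∈ pathLetters m)
    (hred : ∀ u v : Fin N, u < v → w u * w v = 1 →
      ∃ t : Fin N, u < t ∧ t < v ∧ ¬ Commute (w t) (w u)) :
    (List.ofFn w).prod ∈ Subgroup.closure C ↔ ∀ i, w i ∈ C := by
  classical
  constructor
  swap
  · intro hall
    apply Subgroup.list_prod_mem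
    intro x hx
    rw [List.mem_ofFn] at hx
    obtain ⟨i, rfl⟩ := hx
    exact Subgroup.subset_closure (hall i)
  intro hin
  have hch : ∀ i, ∃ ℓ : Stmt15Aux.L m, w i = Stmt15Aux.toG ℓ := by
    intro i
    obtain ⟨j, hj | hj⟩ := hw i
    · exact ⟨(j, true), hj⟩
    · exact ⟨(j, false), hj⟩
  choose ℓ hℓ using hch
  set W : List (Stmt15Aux.L m) := List.ofFn ℓ with hW
  have hWlen : W.length = N := by simp [hW]
  have hprod : (List.ofFn w).prod = Stmt15Aux.eval W := by
    unfold Stmt15Aux.eval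
    congr 1
    rw [hW, List.map_ofFn]
    congr 1
    funext i
    exact hℓ i
  -- letters of W from getElem
  have hWget : ∀ (t : ℕ) (ht : t < N), W[t]'(by omega) = ℓ ⟨t, ht⟩ := by
    intro t ht
    exact List.getElem_ofFn ..
  -- W is reduced
  have hRedW : Stmt15Aux.Red W := by
    rintro p x q s hdec
    have hlenN : N = p.length + 1 + q.length + 1 + s.length := by
      rw [← hWlen, hdec]; simp; omega
    set u := p.length with hu'
    set v := p.length + 1 + q.length with hv'
    have hu : u < N := by omega
    have hv : v < N := by omega
    have hWu : ℓ ⟨u, hu⟩ = x := by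
      have h1 : W[u]? = some x := by
        rw [hdec]; exact Stmt15Aux.getElem?_mid ..
      rw [List.getElem?_eq_getElem (by omega : u < W.length), hWget u hu] at h1
      exact Option.some_injective _ h1
    have hWv : ℓ ⟨v, hv⟩ = Stmt15Aux.linv x := by
      have hdec2 : W = (p ++ x :: q) ++ Stmt15Aux.linv x :: s := by rw [hdec]; simp
      have h1 : W[(p ++ x :: q).length]? = some (Stmt15Aux.linv x) := by
        rw [hdec2]; exact Stmt15Aux.getElem?_mid ..
      have hvlen : (p ++ x :: q).length = v := by simp [hv']; omega
      rw [hvlen, List.getElem?_eq_getElem (by omega : v < W.length), hWget v hv] at h1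
      exact Option.some_injective _ h1
    have hprod1 : w ⟨u, hu⟩ * w ⟨v, hv⟩ = 1 := by
      rw [hℓ ⟨u, hu⟩, hℓ ⟨v, hv⟩, hWu, hWv, Stmt15Aux.toG_linv, mul_inv_cancel]
    obtain ⟨t, hut, htv, hnc⟩ := hred ⟨u, hu⟩ ⟨v, hv⟩ (by simp [Fin.lt_def]; omega) hprod1
    have hut' : u < (t : ℕ) := hut
    have htv' : (t : ℕ) < v := htv
    set k := (t : ℕ) - u - 1 with hk'
    have hk : k < q.length := by omega
    have hWt : ℓ ⟨(t : ℕ), t.2⟩ = q[k] := by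
      have h1 : W[p.length + 1 + k]? = (q ++ Stmt15Aux.linv x :: s)[k]? := by
        rw [hdec]; exact Stmt15Aux.getElem?_mid2 ..
      have h2 : (q ++ Stmt15Aux.linv x :: s)[k]? = some q[k] := by
        rw [List.getElem?_append, if_pos hk]
        exact List.getElem?_eq_getElem hk
      have hidx : p.length + 1 + k = (t : ℕ) := by omega
      rw [hidx, h2, List.getElem?_eq_getElem (by omega : (t : ℕ) < W.length),
        hWget (t : ℕ) t.2] at h1
      exact Option.some_injective _ h1
    refine ⟨q[k], List.getElem_mem hk, ?_⟩
    intro hcm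
    apply hnc
    have e1 : w t = Stmt15Aux.toG q[k] := by
      rw [show t = (⟨(t : ℕ), t.2⟩ : Fin N) from rfl, hℓ, hWt]
    have e2 : w ⟨u, hu⟩ = Stmt15Aux.toG x := by rw [hℓ, hWu]
    rw [e1, e2]
    exact Stmt15Aux.toG_commute hcm
  -- retraction
  rw [hprod] at hin
  have h1 := Stmt15Aux.rho_fix (m := m) hC hCinv hin
  obtain ⟨F, hF1, hF2, hF3⟩ := Stmt15Aux.rho_eval_exists {i | pathGen m i ∈ C} W
  rw [h1] at hF1
  obtain ⟨V, hV1, hV2, hV3⟩ := Stmt15Aux.exists_red F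
  have hWV : Stmt15Aux.E W V := Stmt15Aux.red_unique hRedW hV1 (by rw [hV2, ← hF1])
  have hlenWV : W.length = V.length := hWV.length_eq
  have hFlen : F.length = W.length := by omega
  have hmem := hF3 hFlen
  intro i
  have hmemW : ℓ i ∈ W := by
    rw [hW, List.mem_ofFn]
    exact ⟨i, rfl⟩
  have hS : pathGen m (ℓ i).1 ∈ C := hmem (ℓ i) hmemW
  rw [hℓ i]
  rcases hli : ℓ i with ⟨j, b⟩
  rw [hli] at hS
  cases b
  · show (pathGen m j)⁻¹ ∈ C
    exact hCinv _ hS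
  · exact hS
end

section
/- Let m ≥ 1 and let G be the group presented by generators g_1, …, g_m with relations [g_i, g_{i+1}] = 1 for i = 1, …, m−1. If (x_1,…,x_N) and (y_1,…,y_N) are reduced words of the same length such that the first letters x_1 and y_1 do not commute in G, then x_1⋯x_N ≠ y_1⋯y_N in G. -/
namespace RAAG16

variable {m : ℕ}

abbrev L (m : ℕ) := Fin m × Bool

def linv (a : L m) : L m := (a.1, !a.2)

@[simp] lemma linv_linv (a : L m) : linv (linv a) = a := by simp [linv]

lemma linv_fst (a : L m) : (linv a).1 = a.1 := rfl

def cm (a b : L m) : Prop := (a.1 : ℕ) ≤ (b.1 : ℕ) + 1 ∧ (b.1 : ℕ) ≤ (a.1 : ℕ) + 1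

instance (a b : L m) : Decidable (cm a b) := instDecidableAnd

lemma cm_symm {a b : L m} (h : cm a b) : cm b a := ⟨h.2, h.1⟩

lemma cm_of_fst {a b : L m} (h : a.1 = b.1) : cm a b := by
  constructor <;> omega

@[simp] lemma cm_linv_left {a b : L m} : cm (linv a) b ↔ cm a b := Iff.rfl
@[simp] lemma cm_linv_right {a b : L m} : cm a (linv b) ↔ cm a b := Iff.rfl

def toG (m : ℕ) (a : L m) : PathGroup m :=
  if a.2 then pathGen m a.1 else (pathGen m a.1)⁻¹

lemma toG_linv (a : L m) : toG m (linv a) = (toG m a)⁻¹ := by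
  rcases a with ⟨i, b⟩; cases b <;> simp [toG, linv]

lemma commute_pathGen {i j : Fin m} (hij : (i : ℕ) + 1 = (j : ℕ)) :
    Commute (pathGen m i) (pathGen m j) := by
  have hrel : (FreeGroup.of i * FreeGroup.of j * (FreeGroup.of i)⁻¹ * (FreeGroup.of j)⁻¹ :
      FreeGroup (Fin m)) ∈ pathRels m := ⟨i, j, hij, rfl⟩
  have h1 : ((QuotientGroup.mk (FreeGroup.of i * FreeGroup.of j * (FreeGroup.of i)⁻¹ *
      (FreeGroup.of j)⁻¹) : PathGroup m)) = 1 := by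
    rw [QuotientGroup.eq_one_iff]
    exact Subgroup.subset_normalClosure hrel
  have h2 : pathGen m i * pathGen m j * (pathGen m i)⁻¹ * (pathGen m j)⁻¹ = 1 := h1
  have h3 : pathGen m i * pathGen m j * (pathGen m i)⁻¹ = pathGen m j :=
    mul_inv_eq_one.mp h2
  have h4 : pathGen m i * pathGen m j = pathGen m j * pathGen m i := by
    have := congrArg (· * pathGen m i) h3
    simpa [mul_assoc] using this
  exact h4


lemma commute_toG {a b : L m} (h : cm a b) : Commute (toG m a) (toG m b) := by
  have hg : Commute (pathGen m a.1) (pathGen m b.1) := by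
    rcases h with ⟨h1, h2⟩
    rcases Nat.lt_trichotomy (a.1 : ℕ) (b.1 : ℕ) with hlt | heq | hgt
    · exact commute_pathGen (by omega)
    · have : a.1 = b.1 := Fin.ext heq
      rw [this]
    · exact (commute_pathGen (i := b.1) (j := a.1) (by omega)).symm
  rcases a with ⟨i, sa⟩; rcases b with ⟨j, sb⟩
  cases sa <;> cases sb <;> simp only [toG] <;>
    first
      | exact hg
      | exact hg.inv_left
      | exact hg.inv_right
      | exact hg.inv_left.inv_right

/-- Scan a word for a letter `linv a` preceded only by letters commuting with `a`;
delete it if found. -/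
def del (a : L m) : List (L m) → Option (List (L m))
  | [] => none
  | b :: w =>
      if b = linv a then some w
      else if cm a b then (del a w).map (b :: ·) else none

/-- Reduced words. -/
def Red : List (L m) → Prop
  | [] => True
  | a :: w => del a w = none ∧ Red w

/-- One swap of adjacent commuting letters. -/
inductive OS : List (L m) → List (L m) → Prop
  | swap (u v : L m) (q : List (L m)) (h : cm u v) : OS (u :: v :: q) (v :: u :: q)
  | cons (c : L m) {w₁ w₂ : List (L m)} : OS w₁ w₂ → OS (c :: w₁) (c :: w₂)

lemma OS.symm {w₁ w₂ : List (L m)} (h : OS w₁ w₂) : OS w₂ w₁ := by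
  induction h with
  | swap u v q h => exact OS.swap v u q (cm_symm h)
  | cons c _ ih => exact OS.cons c ih

def EqW : List (L m) → List (L m) → Prop := Relation.ReflTransGen OS

lemma EqW.refl (w : List (L m)) : EqW w w := Relation.ReflTransGen.refl

lemma EqW.of_os {w₁ w₂ : List (L m)} (h : OS w₁ w₂) : EqW w₁ w₂ :=
  Relation.ReflTransGen.single h

lemma EqW.trans {w₁ w₂ w₃ : List (L m)} (h : EqW w₁ w₂) (h' : EqW w₂ w₃) : EqW w₁ w₃ :=
  Relation.ReflTransGen.trans h h'

lemma EqW.cons (c : L m) {w₁ w₂ : List (L m)} (h : EqW w₁ w₂) : EqW (c :: w₁) (c :: w₂) :=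
  Relation.ReflTransGen.lift (c :: ·) (fun _ _ h => OS.cons c h) _ _ h
@[simp] lemma del_nil (a : L m) : del a ([] : List (L m)) = none := rfl

lemma del_cons (a b : L m) (w : List (L m)) :
    del a (b :: w) = if b = linv a then some w
      else if cm a b then (del a w).map (b :: ·) else none := rfl

/-- If `del` succeeds, it deleted a `linv a` preceded by letters commuting with `a`. -/
lemma del_some_spec {a : L m} : ∀ {w w' : List (L m)}, del a w = some w' →
    ∃ k : ℕ, ∃ hk : k < w.length, w[k] = linv a ∧ ∀ t : ℕ, ∀ ht : t < k, cm a (w[t]'(ht.trans hk))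
  | [], _, h => by simp at h
  | b :: w, w', h => by
    rw [del_cons] at h
    by_cases hb : b = linv a
    · exact ⟨0, Nat.succ_pos _, by simpa using hb, fun t ht => by omega⟩
    · rw [if_neg hb] at h
      by_cases hab : cm a b
      · rw [if_pos hab] at h
        obtain ⟨t', ht', rfl⟩ := Option.map_eq_some_iff.mp h
        obtain ⟨k, hk, hget, hcm⟩ := del_some_spec ht'
        refine ⟨k + 1, by simpa using Nat.succ_lt_succ hk, by simpa using hget, ?_⟩
        rintro (_ | t) ht
        · simpa using hab
        · simpa using hcm t (by omega)
      · rw [if_neg hab] at h; simp at h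

/-- Key exchange lemma: deleting a letter of `a`'s kind doesn't create a deletable
letter for a commuting `b`. -/
lemma del_none_pres {a b : L m} (hab : cm a b) : ∀ {w w' : List (L m)},
    del a w = some w' → del b w = none → del b w' = none
  | [], _, h, _ => by simp at h
  | c :: t, w', h, h2 => by
    rw [del_cons] at h h2
    by_cases hca : c = linv a
    · rw [if_pos hca] at h
      obtain rfl : t = w' := by injection h
      by_cases hcb : c = linv b
      · rw [if_pos hcb] at h2; simp at h2
      · rw [if_neg hcb] at h2
        by_cases hbc : cm b c
        · rw [if_pos hbc] at h2; simpa using h2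
        · exact absurd (by rw [hca]; exact (cm_linv_right.mpr (cm_symm hab))) hbc
    · rw [if_neg hca] at h
      by_cases hac : cm a c
      · rw [if_pos hac] at h
        obtain ⟨t', ht', rfl⟩ := Option.map_eq_some_iff.mp h
        by_cases hcb : c = linv b
        · rw [if_pos hcb] at h2; simp at h2
        · rw [if_neg hcb] at h2
          rw [del_cons, if_neg hcb]
          by_cases hbc : cm b c
          · rw [if_pos hbc] at h2 ⊢
            rw [del_none_pres hab ht' (by simpa using h2)]; rfl
          · rw [if_neg hbc]
      · rw [if_neg hac] at h; simp at h

lemma red_del {a : L m} : ∀ {w w' : List (L m)}, Red w → del a w = some w' → Red w'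
  | [], _, _, h => by simp at h
  | c :: t, w', hw, h => by
    obtain ⟨hc, ht⟩ := hw
    rw [del_cons] at h
    by_cases hca : c = linv a
    · rw [if_pos hca] at h
      obtain rfl : t = w' := by injection h
      exact ht
    · rw [if_neg hca] at h
      by_cases hac : cm a c
      · rw [if_pos hac] at h
        obtain ⟨t', ht', rfl⟩ := Option.map_eq_some_iff.mp h
        exact ⟨del_none_pres hac ht' hc, red_del ht ht'⟩
      · rw [if_neg hac] at h; simp at h

def act (a : L m) (w : List (L m)) : List (L m) := (del a w).getD (a :: w)

lemma act_of_none {a : L m} {w : List (L m)} (h : del a w = none) : act a w = a :: w := by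
  simp [act, h]

lemma act_of_some {a : L m} {w w' : List (L m)} (h : del a w = some w') : act a w = w' := by
  simp [act, h]

lemma red_act {a : L m} {w : List (L m)} (hw : Red w) : Red (act a w) := by
  cases h : del a w with
  | none => rw [act_of_none h]; exact ⟨h, hw⟩
  | some w' => rw [act_of_some h]; exact red_del hw h

lemma del_some_inv {a : L m} : ∀ {w w' : List (L m)}, Red w → del a w = some w' →
    del (linv a) w' = none ∧ EqW (linv a :: w') w
  | [], _, _, h => by simp at h
  | b :: t, w', hw, h => by
    obtain ⟨hb, ht⟩ := hw
    rw [del_cons] at h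
    by_cases hba : b = linv a
    · rw [if_pos hba] at h
      obtain rfl : t = w' := by injection h
      subst hba
      exact ⟨hb, EqW.refl _⟩
    · rw [if_neg hba] at h
      by_cases hab : cm a b
      · rw [if_pos hab] at h
        obtain ⟨t', ht', rfl⟩ := Option.map_eq_some_iff.mp h
        have hbne : b ≠ a := by
          rintro rfl
          rw [ht'] at hb; simp at hb
        obtain ⟨ih1, ih2⟩ := del_some_inv ht ht'
        constructor
        · rw [del_cons, if_neg (by simpa [linv_linv] using hbne),
            if_pos (show cm (linv a) b from hab)]
          rw [ih1]; rfl
        · refine (EqW.of_os (OS.swap _ _ _ (cm_linv_left.mpr hab))).trans ?_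
          exact EqW.cons b ih2
      · rw [if_neg hab] at h; simp at h

lemma act_linv_act {a : L m} {w : List (L m)} (hw : Red w) :
    EqW (act (linv a) (act a w)) w := by
  cases h : del a w with
  | none =>
      rw [act_of_none h]
      have : del (linv a) (a :: w) = some w := by
        rw [del_cons, if_pos (by simp [linv_linv])]
      rw [act_of_some this]
      exact EqW.refl _
  | some w' =>
      rw [act_of_some h]
      obtain ⟨h1, h2⟩ := del_some_inv hw h
      rw [act_of_none h1]
      exact h2
/-- `del` interacts coherently with a single swap. -/
lemma del_os {a : L m} : ∀ {w₁ w₂ : List (L m)}, OS w₁ w₂ →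
    (del a w₁ = none ∧ del a w₂ = none) ∨
    (∃ u v, del a w₁ = some u ∧ del a w₂ = some v ∧ (OS u v ∨ u = v)) := by
  intro w₁ w₂ h
  induction h with
  | swap c d q hcd =>
    by_cases hc : c = linv a
    · by_cases hd : d = linv a
      · have hcd' : c = d := by rw [hc, hd]
        subst hcd'
        refine Or.inr ⟨c :: q, c :: q, ?_, ?_, Or.inr rfl⟩ <;>
          rw [del_cons, if_pos hc]
      · refine Or.inr ⟨d :: q, d :: q, ?_, ?_, Or.inr rfl⟩
        · rw [del_cons, if_pos hc]
        · have had : cm a d := by rw [hc] at hcd; exact hcd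
          rw [del_cons, if_neg hd, if_pos (cm_symm (cm_symm had)),
            del_cons, if_pos hc]
          rfl
    · by_cases hd : d = linv a
      · refine Or.inr ⟨c :: q, c :: q, ?_, ?_, Or.inr rfl⟩
        · have hac : cm a c := by rw [hd] at hcd; exact cm_symm hcd
          rw [del_cons, if_neg hc, if_pos hac, del_cons, if_pos hd]
          rfl
        · rw [del_cons, if_pos hd]
      · by_cases hac : cm a c
        · by_cases had : cm a d
          · cases hq : del a q with
            | none =>
              refine Or.inl ⟨?_, ?_⟩ <;>
                simp [del_cons, hc, hd, hac, had, hq]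
            | some t =>
              refine Or.inr ⟨c :: d :: t, d :: c :: t, ?_, ?_, Or.inl (OS.swap c d t hcd)⟩ <;>
                simp [del_cons, hc, hd, hac, had, hq]
          · refine Or.inl ⟨?_, ?_⟩ <;> simp [del_cons, hc, hd, hac, had]
        · by_cases had : cm a d
          · refine Or.inl ⟨?_, ?_⟩ <;> simp [del_cons, hc, hd, hac, had]
          · refine Or.inl ⟨?_, ?_⟩ <;> simp [del_cons, hc, hd, hac, had]
  | cons e h ih =>
    rename_i w₁ w₂
    by_cases he : e = linv a
    · exact Or.inr ⟨w₁, w₂, by rw [del_cons, if_pos he], by rw [del_cons, if_pos he],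
        Or.inl h⟩
    · by_cases hae : cm a e
      · rcases ih with ⟨h1, h2⟩ | ⟨u, v, h1, h2, h3⟩
        · exact Or.inl ⟨by simp [del_cons, he, hae, h1], by simp [del_cons, he, hae, h2]⟩
        · refine Or.inr ⟨e :: u, e :: v, by simp [del_cons, he, hae, h1],
            by simp [del_cons, he, hae, h2], ?_⟩
          rcases h3 with h3 | rfl
          · exact Or.inl (OS.cons e h3)
          · exact Or.inr rfl
      · exact Or.inl ⟨by simp [del_cons, he, hae], by simp [del_cons, he, hae]⟩

lemma red_os {w₁ w₂ : List (L m)} (h : OS w₁ w₂) (hw : Red w₁) : Red w₂ := by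
  induction h with
  | swap c d q hcd =>
    obtain ⟨h1, h2, h3⟩ := hw
    have hdc : d ≠ linv c := by
      intro hdc
      rw [del_cons, if_pos hdc] at h1; simp at h1
    rw [del_cons, if_neg hdc, if_pos hcd] at h1
    have h4 : del c q = none := by simpa using h1
    have hcd2 : ¬ c = linv d := by
      intro hcd2
      apply hdc
      rw [hcd2, linv_linv]
    refine ⟨?_, h4, h3⟩
    rw [del_cons, if_neg hcd2, if_pos (cm_symm hcd), h2]
    rfl
  | cons e h ih =>
    obtain ⟨h1, h2⟩ := hw
    refine ⟨?_, ih h2⟩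
    rcases del_os (a := e) h with ⟨g1, g2⟩ | ⟨u, v, g1, g2, g3⟩
    · exact g2
    · rw [g1] at h1; simp at h1

/-- Deleting for two commuting letters of different kinds commutes. -/
lemma del_del {a b : L m} (hab : cm a b) (hfst : a.1 ≠ b.1) :
    ∀ {w wa wb : List (L m)}, del a w = some wa → del b w = some wb →
    ∃ u, del b wa = some u ∧ del a wb = some u
  | [], _, _, ha, _ => by simp at ha
  | c :: t, wa, wb, ha, hb => by
    rw [del_cons] at ha hb
    have hne : linv a ≠ linv b := by
      intro h
      exact hfst (by rw [← linv_fst a, ← linv_fst b, h])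
    by_cases hca : c = linv a
    · rw [if_pos hca] at ha
      obtain rfl : t = wa := by injection ha
      rw [if_neg (hca ▸ hne), if_pos (by rw [hca]; exact cm_linv_right.mpr (cm_symm hab))] at hb
      obtain ⟨tb, htb, rfl⟩ := Option.map_eq_some_iff.mp hb
      exact ⟨tb, htb, by rw [del_cons, if_pos hca]⟩
    · rw [if_neg hca] at ha
      by_cases hcb : c = linv b
      · rw [if_pos hcb] at hb
        obtain rfl : t = wb := by injection hb
        rw [if_pos (by rw [hcb]; exact cm_linv_right.mpr hab)] at ha
        obtain ⟨ta, hta, rfl⟩ := Option.map_eq_some_iff.mp ha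
        exact ⟨ta, by rw [del_cons, if_pos hcb], hta⟩
      · rw [if_neg hcb] at hb
        by_cases hac : cm a c
        · rw [if_pos hac] at ha
          by_cases hbc : cm b c
          · rw [if_pos hbc] at hb
            obtain ⟨ta, hta, rfl⟩ := Option.map_eq_some_iff.mp ha
            obtain ⟨tb, htb, rfl⟩ := Option.map_eq_some_iff.mp hb
            obtain ⟨u, hu1, hu2⟩ := del_del hab hfst hta htb
            exact ⟨c :: u, by rw [del_cons, if_neg hcb, if_pos hbc, hu1]; rfl,
              by rw [del_cons, if_neg hca, if_pos hac, hu2]; rfl⟩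
          · rw [if_neg hbc] at hb; simp at hb
        · rw [if_neg hac] at ha; simp at ha

lemma act_comm {a b : L m} (hab : cm a b) (hfst : a.1 ≠ b.1) {w : List (L m)} :
    EqW (act a (act b w)) (act b (act a w)) := by
  have hanb : a ≠ linv b := fun h => hfst (by rw [h]; rfl)
  have hbna : b ≠ linv a := fun h => hfst (by rw [h]; rfl)
  cases hA : del a w with
  | none =>
    cases hB : del b w with
    | none =>
      rw [act_of_none hA, act_of_none hB]
      rw [act_of_none (w := b :: w) (by rw [del_cons, if_neg hbna, if_pos hab, hA]; rfl)]
      rw [act_of_none (w := a :: w) (by rw [del_cons, if_neg hanb, if_pos (cm_symm hab), hB]; rfl)]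
      exact EqW.of_os (OS.swap a b w hab)
    | some wb =>
      rw [act_of_none hA, act_of_some hB]
      rw [act_of_none (del_none_pres (cm_symm hab) hB hA)]
      rw [act_of_some (w := a :: w) (w' := a :: wb)
        (by rw [del_cons, if_neg hanb, if_pos (cm_symm hab), hB]; rfl)]
      exact EqW.refl _
  | some wa =>
    cases hB : del b w with
    | none =>
      rw [act_of_some hA, act_of_none hB]
      rw [act_of_none (del_none_pres hab hA hB)]
      rw [act_of_some (w := b :: w) (w' := b :: wa)
        (by rw [del_cons, if_neg hbna, if_pos hab, hA]; rfl)]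
      exact EqW.refl _
    | some wb =>
      rw [act_of_some hA, act_of_some hB]
      obtain ⟨u, hu1, hu2⟩ := del_del hab hfst hA hB
      rw [act_of_some hu1, act_of_some hu2]
      exact EqW.refl _
def RW (m : ℕ) := {w : List (L m) // Red w}

def R : RW m → RW m → Prop := fun w₁ w₂ => OS w₁.1 w₂.1

def S (m : ℕ) := Quot (@R m)

def mkS (w : List (L m)) (hw : Red w) : S m := Quot.mk R ⟨w, hw⟩

lemma mkS_eq_of_eqw {w₁ w₂ : List (L m)} (h : EqW w₁ w₂) (h₁ : Red w₁) (h₂ : Red w₂) :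
    mkS w₁ h₁ = mkS w₂ h₂ := by
  induction h with
  | refl => rfl
  | tail hab hbc ih =>
    rename_i b c
    have hb : Red b := red_os hbc.symm h₂
    exact (ih hb).trans (Quot.sound (hbc : R ⟨b, hb⟩ ⟨c, h₂⟩))

lemma act_eqw_of_os {a : L m} {w₁ w₂ : List (L m)} (h : OS w₁ w₂) :
    EqW (act a w₁) (act a w₂) := by
  rcases del_os (a := a) h with ⟨h1, h2⟩ | ⟨u, v, h1, h2, h3⟩
  · rw [act_of_none h1, act_of_none h2]
    exact EqW.of_os (OS.cons a h)
  · rw [act_of_some h1, act_of_some h2]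
    rcases h3 with h3 | rfl
    · exact EqW.of_os h3
    · exact EqW.refl _

def actS (a : L m) : S m → S m :=
  Quot.lift (fun w => mkS (act a w.1) (red_act w.2))
    (fun w₁ w₂ h => mkS_eq_of_eqw (act_eqw_of_os h) _ _)

@[simp] lemma actS_mkS (a : L m) (w : List (L m)) (hw : Red w) :
    actS a (mkS w hw) = mkS (act a w) (red_act hw) := rfl

def actE (a : L m) : Equiv.Perm (S m) where
  toFun := actS a
  invFun := actS (linv a)
  left_inv := by
    intro s
    induction s using Quot.ind with
    | _ w => exact mkS_eq_of_eqw (act_linv_act w.2) _ w.2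
  right_inv := by
    intro s
    induction s using Quot.ind with
    | _ w =>
      have := act_linv_act (a := linv a) (w := w.1) w.2
      rw [linv_linv] at this
      exact mkS_eq_of_eqw this _ w.2

lemma actE_comm {a b : L m} (hab : cm a b) (hfst : a.1 ≠ b.1) :
    actE (m := m) a * actE b = actE b * actE a := by
  ext s
  induction s using Quot.ind with
  | _ w =>
    show actS a (actS b (Quot.mk R w)) = actS b (actS a (Quot.mk R w))
    exact mkS_eq_of_eqw (act_comm hab hfst)
      (red_act (red_act w.2)) (red_act (red_act w.2))

def fgen (i : Fin m) : Equiv.Perm (S m) := actE (i, true)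

lemma rels_cond : ∀ r ∈ pathRels m, FreeGroup.lift (fgen (m := m)) r = 1 := by
  rintro r ⟨i, j, hij, rfl⟩
  have hcm : cm ((i, true) : L m) (j, true) := ⟨by simp; omega, by simp; omega⟩
  have hfst : ((i, true) : L m).1 ≠ ((j, true) : L m).1 := by
    simp only []
    intro h
    rw [h] at hij
    omega
  have hc := actE_comm hcm hfst
  simp only [map_mul, map_inv, FreeGroup.lift_apply_of]
  rw [fgen, fgen, hc]
  group

def φ : PathGroup m →* Equiv.Perm (S m) := PresentedGroup.toGroup rels_cond

lemma φ_toG (a : L m) (s : S m) : φ (toG m a) s = actS a s := by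
  rcases a with ⟨i, b⟩
  cases b
  · show φ ((pathGen m i)⁻¹) s = _
    rw [map_inv]
    have h1 : φ (pathGen m i) = fgen i := PresentedGroup.toGroup.of rels_cond
    rw [h1]
    rfl
  · show φ (pathGen m i) s = _
    have h1 : φ (pathGen m i) = fgen i := PresentedGroup.toGroup.of rels_cond
    rw [h1]
    rfl

def e₀ : S m := mkS [] trivial

lemma eval_act : ∀ (w : List (L m)) (hw : Red w),
    φ ((w.map (toG m)).prod) e₀ = mkS w hw
  | [], _ => by simp only [List.map_nil, List.prod_nil, map_one]; rfl
  | a :: t, hw => by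
    obtain ⟨h1, h2⟩ := hw
    rw [List.map_cons, List.prod_cons, map_mul, Equiv.Perm.mul_apply,
      eval_act t h2, φ_toG, actS_mkS]
    exact mkS_eq_of_eqw (by rw [act_of_none h1]; exact EqW.refl _) _ _

def Q (c : L m) : List (L m) → Prop
  | [] => False
  | d :: w => d = c ∨ (cm d c ∧ Q c w)

lemma Q_os {c : L m} {w₁ w₂ : List (L m)} (h : OS w₁ w₂) (hq : Q c w₁) : Q c w₂ := by
  induction h with
  | swap u v q hcm =>
    rcases hq with rfl | ⟨huc, rfl | ⟨hvc, hq⟩⟩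
    · exact Or.inr ⟨cm_symm hcm, Or.inl rfl⟩
    · exact Or.inl rfl
    · exact Or.inr ⟨hvc, Or.inr ⟨huc, hq⟩⟩
  | cons e h ih =>
    rcases hq with rfl | ⟨hec, hq⟩
    · exact Or.inl rfl
    · exact Or.inr ⟨hec, ih hq⟩

lemma Q_eqvgen {c : L m} {p q : RW m} (h : Relation.EqvGen R p q) : Q c p.1 ↔ Q c q.1 := by
  induction h with
  | rel x y hxy => exact ⟨Q_os hxy, Q_os hxy.symm⟩
  | refl => exact Iff.rfl
  | symm _ _ _ ih => exact ih.symm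
  | trans _ _ _ _ _ ih1 ih2 => exact ih1.trans ih2
lemma red_of_spec : ∀ {w : List (L m)},
    (∀ u v : ℕ, ∀ hv : v < w.length, ∀ huv : u < v,
      w[v] = linv (w[u]'(huv.trans hv)) →
      ∃ t, ∃ ht : t < w.length, u < t ∧ t < v ∧ ¬ cm w[t] (w[u]'(huv.trans hv))) → Red w
  | [], _ => trivial
  | a :: t, H => by
    constructor
    · cases hdel : del a t with
      | none => rfl
      | some s =>
        exfalso
        obtain ⟨k, hk, hget, hcm⟩ := del_some_spec hdel
        have hlen : k + 1 < (a :: t).length := by simpa using Nat.succ_lt_succ hk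
        have hv : (a :: t)[k+1]'hlen = linv ((a :: t)[0]'(Nat.succ_pos _)) := by
          simpa using hget
        obtain ⟨t', ht', h1, h2, h3⟩ := H 0 (k+1) hlen (Nat.succ_pos k) hv
        obtain ⟨s', rfl⟩ : ∃ s', t' = s' + 1 := ⟨t' - 1, by omega⟩
        apply h3
        have hs' : s' < t.length := by simpa using ht'
        have e1 : (a :: t)[s'+1]'ht' = t[s']'hs' := by simp
        have e0 : (a :: t)[0]'(Nat.lt_trans h1 ht') = a := by simp
        rw [e1, e0]
        exact cm_symm (hcm s' (by omega))
    · refine red_of_spec (fun u v hv huv hinv => ?_)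
      have hv' : v + 1 < (a :: t).length := by simpa using Nat.succ_lt_succ hv
      have hinv' : (a :: t)[v+1]'hv' =
          linv ((a :: t)[u+1]'(Nat.succ_lt_succ (huv.trans hv))) := by
        simpa using hinv
      obtain ⟨t', ht', h1, h2, h3⟩ := H (u+1) (v+1) hv' (by omega) hinv'
      obtain ⟨s', rfl⟩ : ∃ s', t' = s' + 1 := ⟨t' - 1, by omega⟩
      have hs' : s' < t.length := by simpa using ht'
      refine ⟨s', hs', by omega, by omega, ?_⟩
      intro hcontra
      apply h3
      have e1 : (a :: t)[s'+1]'ht' = t[s']'hs' := by simp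
      have e0 : (a :: t)[u+1]'(Nat.lt_trans h1 ht') =
          t[u]'(huv.trans hv) := by simp
      rw [e1, e0]
      exact hcontra

end RAAG16

open RAAG16 in
theorem stmt16' (m : ℕ) (hm : 1 ≤ m) (N : ℕ) (hN : 0 < N)
    (x y : Fin N → PathGroup m)
    (hx : ∀ i, x i ∈ pathLetters m) (hy : ∀ i, y i ∈ pathLetters m)
    (hxred : ∀ u v : Fin N, u < v → x u * x v = 1 →
      ∃ t : Fin N, u < t ∧ t < v ∧ ¬ Commute (x t) (x u))
    (hyred : ∀ u v : Fin N, u < v → y u * y v = 1 →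
      ∃ t : Fin N, u < t ∧ t < v ∧ ¬ Commute (y t) (y u))
    (hfirst : ¬ Commute (x ⟨0, hN⟩) (y ⟨0, hN⟩)) :
    (List.ofFn x).prod ≠ (List.ofFn y).prod := by
  classical
  intro hEq
  choose jx hjx using hx
  choose jy hjy using hy
  set ℓx : Fin N → L m :=
    fun i => if x i = pathGen m (jx i) then (jx i, true) else (jx i, false) with hℓxdef
  set ℓy : Fin N → L m :=
    fun i => if y i = pathGen m (jy i) then (jy i, true) else (jy i, false) with hℓydef
  have hℓx : ∀ i, toG m (ℓx i) = x i := by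
    intro i
    by_cases h : x i = pathGen m (jx i)
    · simp [hℓxdef, h, toG]
    · rcases hjx i with h' | h'
      · exact absurd h' h
      · simp only [hℓxdef]
        rw [if_neg h]
        simpa [toG] using h'.symm
  have hℓy : ∀ i, toG m (ℓy i) = y i := by
    intro i
    by_cases h : y i = pathGen m (jy i)
    · simp [hℓydef, h, toG]
    · rcases hjy i with h' | h'
      · exact absurd h' h
      · simp only [hℓydef]
        rw [if_neg h]
        simpa [toG] using h'.symm
  set wx : List (L m) := List.ofFn ℓx with hwx
  set wy : List (L m) := List.ofFn ℓy with hwy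
  have hlenx : wx.length = N := by simp [hwx]
  have hleny : wy.length = N := by simp [hwy]
  have hRx : Red wx := by
    apply red_of_spec
    intro u v hv huv hinv
    have hvN : v < N := by rwa [hlenx] at hv
    have huN : u < N := huv.trans hvN
    have egx : ∀ (k : ℕ) (hk : k < wx.length), wx[k] = ℓx ⟨k, by rwa [hlenx] at hk⟩ := by
      intro k hk; simp [hwx]
    rw [egx v hv, egx u (huv.trans hv)] at hinv
    have hone : x ⟨u, huN⟩ * x ⟨v, hvN⟩ = 1 := by
      rw [← hℓx, ← hℓx, hinv, toG_linv, mul_inv_cancel]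
    obtain ⟨t, h1, h2, h3⟩ := hxred ⟨u, huN⟩ ⟨v, hvN⟩ (by simpa [Fin.lt_def] using huv) hone
    refine ⟨t.1, by rw [hlenx]; exact t.isLt, by simpa [Fin.lt_def] using h1,
      by simpa [Fin.lt_def] using h2, ?_⟩
    intro hcm
    apply h3
    rw [egx t.1 (by rw [hlenx]; exact t.isLt), egx u (huv.trans hv)] at hcm
    have := commute_toG hcm
    rwa [hℓx, hℓx, Fin.eta] at this
  have hRy : Red wy := by
    apply red_of_spec
    intro u v hv huv hinv
    have hvN : v < N := by rwa [hleny] at hv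
    have huN : u < N := huv.trans hvN
    have egy : ∀ (k : ℕ) (hk : k < wy.length), wy[k] = ℓy ⟨k, by rwa [hleny] at hk⟩ := by
      intro k hk; simp [hwy]
    rw [egy v hv, egy u (huv.trans hv)] at hinv
    have hone : y ⟨u, huN⟩ * y ⟨v, hvN⟩ = 1 := by
      rw [← hℓy, ← hℓy, hinv, toG_linv, mul_inv_cancel]
    obtain ⟨t, h1, h2, h3⟩ := hyred ⟨u, huN⟩ ⟨v, hvN⟩ (by simpa [Fin.lt_def] using huv) hone
    refine ⟨t.1, by rw [hleny]; exact t.isLt, by simpa [Fin.lt_def] using h1,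
      by simpa [Fin.lt_def] using h2, ?_⟩
    intro hcm
    apply h3
    rw [egy t.1 (by rw [hleny]; exact t.isLt), egy u (huv.trans hv)] at hcm
    have := commute_toG hcm
    rwa [hℓy, hℓy, Fin.eta] at this
  have hmapx : wx.map (toG m) = List.ofFn x := by
    rw [hwx, List.map_ofFn]
    exact congrArg List.ofFn (funext hℓx)
  have hmapy : wy.map (toG m) = List.ofFn y := by
    rw [hwy, List.map_ofFn]
    exact congrArg List.ofFn (funext hℓy)
  have hmk : mkS wx hRx = mkS wy hRy := by
    rw [← eval_act wx hRx, ← eval_act wy hRy, hmapx, hmapy, hEq]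
  have hEqv : Relation.EqvGen R (⟨wx, hRx⟩ : RW m) ⟨wy, hRy⟩ := Quot.eq.mp hmk
  obtain ⟨n, rfl⟩ : ∃ n, N = n + 1 := ⟨N - 1, by omega⟩
  have hz : (⟨0, hN⟩ : Fin (n + 1)) = 0 := by ext; simp
  set c : L m := ℓy ⟨0, hN⟩ with hc
  have hQy : Q c wy := by
    rw [hwy, List.ofFn_succ]
    exact Or.inl (by rw [hc, hz])
  have hQx : Q c wx := (Q_eqvgen hEqv).mpr hQy
  rw [hwx, List.ofFn_succ] at hQx
  apply hfirst
  rcases hQx with h | ⟨h, _⟩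
  · have : x ⟨0, hN⟩ = y ⟨0, hN⟩ := by
      rw [← hℓx ⟨0, hN⟩, ← hℓy ⟨0, hN⟩, ← hc, hz, h]
    rw [this]
  · have := commute_toG h
    rwa [← hz, hℓx, hc, hℓy] at this


/-- If `(x_1,…,x_N)` and `(y_1,…,y_N)` are reduced words whose first letters do not commute,
then they represent different elements of `G = ⟨g_1,…,g_m ∣ [g_i,g_{i+1}]=1⟩`. -/
theorem stmt16 (m : ℕ) (hm : 1 ≤ m) (N : ℕ) (hN : 0 < N)
    (x y : Fin N → PathGroup m)
    (hx : ∀ i, x i ∈ pathLetters m) (hy : ∀ i, y i ∈ pathLetters m)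
    (hxred : ∀ u v : Fin N, u < v → x u * x v = 1 →
      ∃ t : Fin N, u < t ∧ t < v ∧ ¬ Commute (x t) (x u))
    (hyred : ∀ u v : Fin N, u < v → y u * y v = 1 →
      ∃ t : Fin N, u < t ∧ t < v ∧ ¬ Commute (y t) (y u))
    (hfirst : ¬ Commute (x ⟨0, hN⟩) (y ⟨0, hN⟩)) :
    (List.ofFn x).prod ≠ (List.ofFn y).prod := by
  exact stmt16' m hm N hN x y hx hy hxred hyred hfirst
end

section
/- Let m ≥ 1 and let G be the group presented by generators g_1, …, g_m with relations [g_i, g_{i+1}] = 1 for i = 1, …, m−1. Then every element of G is represented by a reduced word, and two reduced words represent the same element of G if and only if they are related by a finite sequence of swaps of adjacent commuting letters. In particular, the length of a reduced word representing a given element is a well-defined invariant of that element. -/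
/-- A word (list of letters) is reduced if whenever two of its letters are mutually inverse,
some letter strictly between them fails to commute with them. -/
def IsReducedWord {m : ℕ} (l : List (PathGroup m)) : Prop :=
  ∀ u v : Fin l.length, u < v → l.get u * l.get v = 1 →
    ∃ t : Fin l.length, u < t ∧ t < v ∧ ¬ Commute (l.get t) (l.get u)

/-- One swap of two adjacent commuting letters. -/
def SwapStep {m : ℕ} (l₁ l₂ : List (PathGroup m)) : Prop :=
  ∃ (a b : List (PathGroup m)) (x y : PathGroup m), Commute x y ∧
    l₁ = a ++ x :: y :: b ∧ l₂ = a ++ y :: x :: b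


namespace Stmt17
variable {m : ℕ}

/-- Abstract letters. -/
abbrev L (m : ℕ) := Fin m × Bool

def linv (x : L m) : L m := (x.1, !x.2)

@[simp] lemma linv_linv (x : L m) : linv (linv x) = x := by
  simp [linv]

lemma linv_fst (x : L m) : (linv x).1 = x.1 := rfl

/-- Abstract commutation relation on letters. -/
def R (x y : L m) : Prop := (x.1 : ℕ) ≤ y.1 + 1 ∧ (y.1 : ℕ) ≤ x.1 + 1

lemma R.symm {x y : L m} (h : R x y) : R y x := ⟨h.2, h.1⟩

lemma R_symm_iff {x y : L m} : R x y ↔ R y x := ⟨R.symm, R.symm⟩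

@[simp] lemma R_linv_right {x y : L m} : R x (linv y) ↔ R x y := Iff.rfl
@[simp] lemma R_linv_left {x y : L m} : R (linv x) y ↔ R x y := Iff.rfl

lemma R_refl (x : L m) : R x x := ⟨by omega, by omega⟩

/-- A single swap of adjacent commuting letters. -/
def Swp (w₁ w₂ : List (L m)) : Prop :=
  ∃ a x y b, R x y ∧ w₁ = a ++ x :: y :: b ∧ w₂ = a ++ y :: x :: b

lemma Swp.symm {w₁ w₂ : List (L m)} (h : Swp w₁ w₂) : Swp w₂ w₁ := by
  obtain ⟨a, x, y, b, hR, h1, h2⟩ := h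
  exact ⟨a, y, x, b, hR.symm, h2, h1⟩

/-- Swap equivalence. -/
def Req (w₁ w₂ : List (L m)) : Prop := Relation.ReflTransGen Swp w₁ w₂

lemma Req.refl (w : List (L m)) : Req w w := Relation.ReflTransGen.refl

lemma Req.trans {a b c : List (L m)} (h : Req a b) (h' : Req b c) : Req a c :=
  Relation.ReflTransGen.trans h h'

lemma Req.symm {a b : List (L m)} (h : Req a b) : Req b a :=
  by haveI : Std.Symm (@Swp m) := ⟨fun _ _ => Swp.symm⟩; exact Relation.ReflTransGen.symmetric.symm _ _ h

lemma Swp.req {a b : List (L m)} (h : Swp a b) : Req a b :=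
  Relation.ReflTransGen.single h

lemma Swp.length_eq {w₁ w₂ : List (L m)} (h : Swp w₁ w₂) : w₁.length = w₂.length := by
  obtain ⟨a, x, y, b, _, h1, h2⟩ := h; subst h1; subst h2; simp

lemma Req.length_eq {w₁ w₂ : List (L m)} (h : Req w₁ w₂) : w₁.length = w₂.length := by
  induction h with
  | refl => rfl
  | tail _ h ih => exact ih.trans h.length_eq

lemma Swp.cons {w₁ w₂ : List (L m)} (z : L m) (h : Swp w₁ w₂) : Swp (z :: w₁) (z :: w₂) := by
  obtain ⟨a, x, y, b, hR, h1, h2⟩ := h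
  exact ⟨z :: a, x, y, b, hR, by simp [h1], by simp [h2]⟩

lemma Req.cons {w₁ w₂ : List (L m)} (z : L m) (h : Req w₁ w₂) : Req (z :: w₁) (z :: w₂) :=
  Relation.ReflTransGen.lift (z :: ·) (fun _ _ h => h.cons z) _ _ h

lemma Req.append_left {w₁ w₂ : List (L m)} (p : List (L m)) (h : Req w₁ w₂) :
    Req (p ++ w₁) (p ++ w₂) := by
  induction p with
  | nil => exact h
  | cons z p ih => exact ih.cons z

/-- Move a letter commuting with everything before it to the front. -/
lemma move_front {p : List (L m)} {x : L m} (q : List (L m)) (hp : ∀ z ∈ p, R z x) :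
    Req (p ++ x :: q) (x :: (p ++ q)) := by
  induction p with
  | nil => exact Req.refl _
  | cons z p ih =>
    have h1 : Req (z :: (p ++ x :: q)) (z :: (x :: (p ++ q))) :=
      (ih (fun z hz => hp z (List.mem_cons_of_mem _ hz))).cons z
    refine h1.trans ?_
    exact (Swp.req ⟨[], z, x, p ++ q, hp z (List.mem_cons_self), rfl, rfl⟩)

/-- One-step head-extraction lemma. -/
lemma swp_extract {w₁ w₂ : List (L m)} (h : Swp w₁ w₂) {p q : List (L m)} {x : L m}
    (hw : w₂ = p ++ x :: q) (hp : ∀ z ∈ p, R z x) :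
    ∃ p' q', w₁ = p' ++ x :: q' ∧ (∀ z ∈ p', R z x) ∧ Req (p' ++ q') (p ++ q) := by
  obtain ⟨a, s, t, b, hR, h1, h2⟩ := h
  subst h1; subst h2
  induction a generalizing p with
  | nil =>
    rcases p with _ | ⟨t', p₁⟩
    · -- p = [] : x = t, q = s :: b
      simp only [List.nil_append] at hw
      obtain ⟨h1, h2⟩ := List.cons_eq_cons.mp hw
      subst h1; subst h2
      exact ⟨[s], b, rfl, by simpa using hR, Req.refl _⟩
    · simp only [List.cons_append, List.nil_append] at hw
      obtain ⟨h1, h2⟩ := List.cons_eq_cons.mp hw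
      subst h1
      rcases p₁ with _ | ⟨s', p₂⟩
      · simp only [List.nil_append] at h2
        obtain ⟨h3, h4⟩ := List.cons_eq_cons.mp h2
        subst h3; subst h4
        exact ⟨[], t :: b, rfl, by simp, Req.refl _⟩
      · simp only [List.cons_append] at h2
        obtain ⟨h3, h4⟩ := List.cons_eq_cons.mp h2
        subst h3; subst h4
        refine ⟨s :: t :: p₂, q, rfl, ?_, ?_⟩
        · intro z hz
          simp only [List.mem_cons] at hz
          rcases hz with rfl | rfl | hz
          · exact hp _ (by simp)
          · exact hp _ (by simp)
          · exact hp _ (by simp [hz])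
        · exact Swp.req ⟨[], s, t, p₂ ++ q, hR, rfl, rfl⟩
  | cons z a' ih =>
    rcases p with _ | ⟨z', p₁⟩
    · simp only [List.cons_append, List.nil_append] at hw
      obtain ⟨h1, h2⟩ := List.cons_eq_cons.mp hw
      subst h1
      refine ⟨[], a' ++ s :: t :: b, rfl, by simp, ?_⟩
      simp only [List.nil_append, ← h2]
      exact Swp.req ⟨a', s, t, b, hR, rfl, rfl⟩
    · simp only [List.cons_append] at hw
      obtain ⟨h1, h2⟩ := List.cons_eq_cons.mp hw
      subst h1
      obtain ⟨p₁', q', hw', hp', hreq⟩ := ih (fun u hu => hp u (List.mem_cons_of_mem _ hu)) h2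
      refine ⟨z :: p₁', q', by simp [hw'], ?_, ?_⟩
      · intro u hu
        simp only [List.mem_cons] at hu
        rcases hu with rfl | hu
        · exact hp _ (by simp)
        · exact hp' _ hu
      · simpa using hreq.cons z

/-- Head extraction along a chain. -/
lemma req_extract {w u : List (L m)} {x : L m} (h : Req w (x :: u)) :
    ∃ p q, w = p ++ x :: q ∧ (∀ z ∈ p, R z x) ∧ Req (p ++ q) u := by
  have h' : Req (x :: u) w := h.symm
  clear h
  induction h' with
  | refl => exact ⟨[], u, rfl, by simp, Req.refl _⟩
  | tail hchain hstep ih =>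
    obtain ⟨p, q, hw, hp, hreq⟩ := ih
    obtain ⟨p', q', hw', hp', hreq'⟩ := swp_extract hstep.symm hw hp
    exact ⟨p', q', hw', hp', hreq'.trans hreq⟩

/-- Left cancellation for swap equivalence. -/
lemma req_cancel {s t : List (L m)} {a : L m} (h : Req (a :: s) (a :: t)) : Req s t := by
  obtain ⟨p, q, hw, hp, hreq⟩ := req_extract h
  rcases p with _ | ⟨a₀, p'⟩
  · simp only [List.nil_append] at hw hreq
    obtain ⟨-, rfl⟩ := List.cons_eq_cons.mp hw
    exact hreq
  · simp only [List.cons_append] at hw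
    obtain ⟨rfl, hs⟩ := List.cons_eq_cons.mp hw
    have h1 : Req s (a :: (p' ++ q)) := by
      rw [hs]
      exact move_front q (fun z hz => hp z (List.mem_cons_of_mem _ hz))
    exact h1.trans hreq

/-- Extraction when heads differ. -/
lemma req_extract_ne {w' u : List (L m)} {a b : L m} (hab : b ≠ a)
    (h : Req (b :: w') (a :: u)) :
    ∃ w'', R b a ∧ Req w' (a :: w'') ∧ Req u (b :: w'') := by
  obtain ⟨p, q, hw, hp, hreq⟩ := req_extract h
  rcases p with _ | ⟨b₀, p'⟩
  · simp only [List.nil_append] at hw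
    exact absurd (List.cons_eq_cons.mp hw).1 hab
  · simp only [List.cons_append] at hw
    obtain ⟨rfl, hs⟩ := List.cons_eq_cons.mp hw
    refine ⟨p' ++ q, hp _ (by simp), ?_, ?_⟩
    · rw [hs]
      exact move_front q (fun z hz => hp z (List.mem_cons_of_mem _ hz))
    · exact hreq.symm
/-- A word has a cancellable pair. -/
def Canc (w : List (L m)) : Prop :=
  ∃ (u v : ℕ) (hv : v < w.length) (hu : u < v),
    w[v] = linv (w[u]'(hu.trans hv)) ∧
    ∀ t (ht : t < w.length), u < t → t < v → R w[t] (w[u]'(hu.trans hv))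

/-- An (abstract) reduced word. -/
def Red (w : List (L m)) : Prop := ¬ Canc w

lemma getElem_congr' {α : Type*} (w : List α) {i j : ℕ} (hij : i = j) (hi : i < w.length) :
    w[i] = w[j]'(hij ▸ hi) := by subst hij; rfl

lemma getElem_mid0 (a b : List (L m)) (x y : L m) (h : a.length < (a ++ x :: y :: b).length) :
    (a ++ x :: y :: b)[a.length] = x := by
  rw [List.getElem_append_right (le_refl _)]
  simp

lemma getElem_mid1 (a b : List (L m)) (x y : L m)
    (h : a.length + 1 < (a ++ x :: y :: b).length) :
    (a ++ x :: y :: b)[a.length + 1] = y := by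
  rw [List.getElem_append_right (by omega)]
  rw [getElem_congr' _ (show a.length + 1 - a.length = 1 by omega)]
  simp

lemma getElem_mid2 (a b : List (L m)) (x y : L m) (t : ℕ)
    (h : t < (a ++ x :: y :: b).length) (ht : a.length + 2 ≤ t) :
    (a ++ x :: y :: b)[t] = b[t - (a.length + 2)]'(by simp at h; omega) := by
  rw [List.getElem_append_right (by omega)]
  rw [getElem_congr' _ (show t - a.length = (t - (a.length + 2)) + 1 + 1 by omega)]
  simp

/-- getElem description of a swap step. -/
lemma swp_getElem {w₁ w₂ : List (L m)} (h : Swp w₁ w₂) :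
    ∃ k, ∃ (hk : k + 1 < w₁.length),
      w₂.length = w₁.length ∧
      R (w₁[k]'(by omega)) (w₁[k+1]'hk) ∧
      (∀ (h2 : k + 1 < w₂.length), w₂[k]'(by omega) = w₁[k+1]'hk ∧
        w₂[k+1]'h2 = w₁[k]'(by omega)) ∧
      ∀ t (ht : t < w₁.length) (ht2 : t < w₂.length), t ≠ k → t ≠ k + 1 → w₂[t] = w₁[t] := by
  obtain ⟨a, x, y, b, hR, h1, h2⟩ := h
  subst h1; subst h2
  have hlen : a.length + 1 < (a ++ x :: y :: b).length := by simp
  refine ⟨a.length, hlen, by simp, ?_, ?_, ?_⟩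
  · rw [getElem_mid0, getElem_mid1]
    exact hR
  · intro h2
    constructor
    · rw [getElem_mid0, getElem_mid1]
    · rw [getElem_mid1, getElem_mid0]
  · intro t ht ht2 hne1 hne2
    rcases lt_or_ge t a.length with hlt | hge
    · rw [List.getElem_append_left hlt, List.getElem_append_left hlt]
    · have h3 : a.length + 2 ≤ t := by omega
      rw [getElem_mid2 a b y x t ht2 h3, getElem_mid2 a b x y t ht h3]
/-- A swap step preserves having a cancellable pair. -/
lemma Canc.of_swp {w₁ w₂ : List (L m)} (h : Swp w₁ w₂) (hc : Canc w₂) : Canc w₁ := by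
  obtain ⟨k, hk, hlen, hRk, hswap, hoth⟩ := swp_getElem h
  obtain ⟨u, v, hv, huv, hinv, hbet⟩ := hc
  obtain ⟨hsw1, hsw2⟩ := hswap (by omega)
  have e : ∀ t (ht : t < w₂.length), t ≠ k → t ≠ k + 1 → w₂[t] = w₁[t]'(by omega) :=
    fun t ht h1 h2 => hoth t (by omega) ht h1 h2
  by_cases hu1 : u = k
  · by_cases hv1 : v = k + 1
    · -- case A : the swapped pair itself
      subst hu1; subst hv1
      refine ⟨u, u + 1, by omega, by omega, ?_, fun t ht h1 h2 => absurd h1 (by omega)⟩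
      rw [hsw1, hsw2] at hinv
      rw [hinv, linv_linv]
    · -- u = k, v > k+1
      subst hu1
      have hvgt : u + 1 < v := by omega
      refine ⟨u + 1, v, by omega, hvgt, ?_, ?_⟩
      · rw [← hsw1, ← e v hv (by omega) (by omega)]
        exact hinv
      · intro t ht h1 h2
        rw [← hsw1, ← e t (by omega) (by omega) (by omega)]
        exact hbet t (by omega) (by omega) h2
  · by_cases hu2 : u = k + 1
    · -- u = k+1 (so v > k+1)
      subst hu2
      refine ⟨k, v, by omega, by omega, ?_, ?_⟩
      · rw [← hsw2, ← e v hv (by omega) (by omega)]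
        exact hinv
      · intro t ht h1 h2
        by_cases htk : t = k + 1
        · subst htk
          exact hRk.symm
        · rw [← hsw2, ← e t (by omega) (by omega) htk]
          exact hbet t (by omega) (by omega) h2
    · -- u ∉ {k, k+1}
      by_cases hv1 : v = k
      · subst hv1
        refine ⟨u, v + 1, by omega, by omega, ?_, ?_⟩
        · rw [← hsw1, ← e u (by omega) hu1 hu2]
          exact hinv
        · intro t ht h1 h2
          by_cases htk : t = v
          · subst htk
            rw [← hsw2, ← e u (by omega) hu1 hu2]
            have h5 : w₂[u]'(by omega) = linv (w₂[t]'(by omega)) := by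
              rw [hinv, linv_linv]
            rw [h5, hsw1, hsw2]
            exact hRk
          · rw [← e t (by omega) htk (by omega), ← e u (by omega) hu1 hu2]
            exact hbet t (by omega) h1 (by omega)
      · by_cases hv2 : v = k + 1
        · subst hv2
          refine ⟨u, k, by omega, by omega, ?_, ?_⟩
          · rw [← hsw2, ← e u (by omega) hu1 hu2]
            exact hinv
          · intro t ht h1 h2
            rw [← e t (by omega) (by omega) (by omega), ← e u (by omega) hu1 hu2]
            exact hbet t (by omega) h1 (by omega)
        · -- u, v ∉ {k, k+1}
          refine ⟨u, v, by omega, huv, ?_, ?_⟩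
          · rw [← e v (by omega) hv1 hv2, ← e u (by omega) hu1 hu2]
            exact hinv
          · intro t ht h1 h2
            by_cases htk : t = k
            · subst htk
              rw [← hsw2, ← e u (by omega) hu1 hu2]
              exact hbet (t+1) (by omega) (by omega) (by omega)
            · by_cases htk2 : t = k + 1
              · subst htk2
                rw [← hsw1, ← e u (by omega) hu1 hu2]
                exact hbet k (by omega) (by omega) (by omega)
              · rw [← e t (by omega) htk htk2, ← e u (by omega) hu1 hu2]
                exact hbet t (by omega) h1 h2

lemma Red.of_swp {w₁ w₂ : List (L m)} (h : Swp w₁ w₂) (hr : Red w₁) : Red w₂ :=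
  fun hc => hr (Canc.of_swp h hc)

lemma Red.of_req {w₁ w₂ : List (L m)} (h : Req w₁ w₂) (hr : Red w₁) : Red w₂ := by
  induction h with
  | refl => exact hr
  | tail _ hstep ih => exact ih.of_swp hstep
lemma Red.nil : Red ([] : List (L m)) := by
  rintro ⟨u, v, hv, hu, -, -⟩
  simp at hv

lemma Red.of_cons {x : L m} {w : List (L m)} (h : Red (x :: w)) : Red w := by
  rintro ⟨u, v, hv, hu, hinv, hbet⟩
  refine h ⟨u + 1, v + 1, by simpa using Nat.succ_lt_succ hv, by omega, by simpa using hinv, ?_⟩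
  intro t ht h1 h2
  obtain ⟨t', rfl⟩ : ∃ t', t = t' + 1 := ⟨t - 1, by omega⟩
  simpa using hbet t' (by simpa using Nat.lt_of_succ_lt_succ ht) (by omega) (by omega)

lemma canc_pair (x : L m) (c : List (L m)) : Canc (x :: linv x :: c) := by
  refine ⟨0, 1, by simp, by omega, by simp, ?_⟩
  intro t ht h1 h2; omega

/-- Decomposition of a cancellable pair. -/
lemma canc_decomp_at {w : List (L m)} {u v : ℕ} (hv : v < w.length) (hu : u < v)
    (hinv : w[v] = linv (w[u]'(hu.trans hv)))
    (hbet : ∀ t (ht : t < w.length), u < t → t < v → R w[t] (w[u]'(hu.trans hv))) :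
    w = w.take u ++ (w[u]'(hu.trans hv)) ::
        ((w.drop (u+1)).take (v - (u+1)) ++ linv (w[u]'(hu.trans hv)) :: w.drop (v+1)) ∧
      ∀ z ∈ (w.drop (u+1)).take (v - (u+1)), R z (w[u]'(hu.trans hv)) := by
  constructor
  · conv_lhs => rw [← List.take_append_drop u w]
    congr 1
    rw [List.drop_eq_getElem_cons (hu.trans hv)]
    congr 1
    conv_lhs => rw [← List.take_append_drop (v - (u+1)) (w.drop (u+1))]
    congr 1
    rw [List.drop_drop]
    rw [show u + 1 + (v - (u + 1)) = v by omega]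
    rw [List.drop_eq_getElem_cons hv, hinv]
  · intro z hz
    obtain ⟨j, hj, rfl⟩ := List.mem_iff_getElem.mp hz
    rw [List.getElem_take, List.getElem_drop]
    have hj' : j < v - (u + 1) := by
      have := hj
      simp only [List.length_take, List.length_drop] at this
      omega
    exact hbet (u + 1 + j) (by simp at hj ⊢; omega) (by omega) (by omega)

/-- If `w` is reduced but `x :: w` is not, the letter `linv x` can be pulled to the front. -/
lemma red_cons_dichotomy {x : L m} {w : List (L m)} (hred : Red w) (hc : Canc (x :: w)) :
    ∃ u, Red u ∧ Req w (linv x :: u) := by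
  obtain ⟨u, v, hv, hu, hinv, hbet⟩ := hc
  rcases Nat.eq_zero_or_pos u with rfl | hpos
  · obtain ⟨hdec, hq⟩ := canc_decomp_at hv hu hinv hbet
    rw [List.take_zero, List.nil_append] at hdec
    have hy : ((x :: w)[0]'(hu.trans hv)) = x := rfl
    rw [hy] at hdec hq
    obtain ⟨-, hw⟩ := List.cons_eq_cons.mp hdec
    set q := ((x :: w).drop (0+1)).take (v - (0+1)) with hqd
    set r := (x :: w).drop (v+1) with hrd
    have hreq : Req w (linv x :: (q ++ r)) := by
      conv_lhs => rw [hw]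
      exact move_front r (fun z hz => hq z hz)
    have hr1 := hred.of_req hreq
    exact ⟨_, hr1.of_cons, hreq⟩
  · exfalso
    apply hred
    obtain ⟨u', rfl⟩ : ∃ u', u = u' + 1 := ⟨u - 1, by omega⟩
    obtain ⟨v', rfl⟩ : ∃ v', v = v' + 1 := ⟨v - 1, by omega⟩
    refine ⟨u', v', by simpa using Nat.lt_of_succ_lt_succ hv, by omega, by simpa using hinv, ?_⟩
    intro t ht h1 h2
    exact hbet (t + 1) (by simpa using Nat.succ_lt_succ ht) (by omega) (by omega)
/-- Reduced words. -/
def RW (m : ℕ) := {w : List (L m) // Red w}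

instance rwSetoid (m : ℕ) : Setoid (RW m) where
  r w₁ w₂ := Req w₁.1 w₂.1
  iseqv := ⟨fun w => Req.refl _, Req.symm, Req.trans⟩

/-- The space of reduced words modulo commutation. -/
def S (m : ℕ) := Quotient (rwSetoid m)

def mkS (w : List (L m)) (h : Red w) : S m := Quotient.mk _ ⟨w, h⟩

lemma mk_eq_of_req {w v : List (L m)} {hw : Red w} {hv : Red v} (h : Req w v) :
    mkS w hw = mkS v hv := Quotient.sound h

lemma req_of_mk_eq {w v : List (L m)} {hw : Red w} {hv : Red v} (h : mkS w hw = mkS v hv) :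
    Req w v := Quotient.exact h

lemma red_cons_of_not {x : L m} {w : List (L m)} (hred : Red w)
    (h : ¬ ∃ u, Red u ∧ Req w (linv x :: u)) : Red (x :: w) :=
  fun hc => h (red_cons_dichotomy hred hc)

open Classical in
/-- The action of the letter `x` on reduced words. -/
noncomputable def act₀ (x : L m) (w : RW m) : RW m :=
  if h : ∃ u, Red u ∧ Req w.1 (linv x :: u) then ⟨h.choose, h.choose_spec.1⟩
  else ⟨x :: w.1, red_cons_of_not w.2 h⟩

/-- The action of the letter `x` on `S m`. -/
noncomputable def act (x : L m) : S m → S m :=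
  Quotient.map (act₀ x) (by
    intro w v hwv
    by_cases h : ∃ u, Red u ∧ Req w.1 (linv x :: u)
    · have h' : ∃ u, Red u ∧ Req v.1 (linv x :: u) := by
        obtain ⟨u, hu, hr⟩ := h
        exact ⟨u, hu, hwv.symm.trans hr⟩
      show Req (act₀ x w).1 (act₀ x v).1
      unfold act₀
      refine (congrArg₂ Req (congrArg Subtype.val (dif_pos h : act₀ x w = ⟨h.choose, h.choose_spec.1⟩))
        (congrArg Subtype.val (dif_pos h' : act₀ x v = ⟨h'.choose, h'.choose_spec.1⟩))).mpr ?_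
      show Req _ _
      exact req_cancel ((h.choose_spec.2.symm.trans hwv).trans h'.choose_spec.2)
    · have h' : ¬ ∃ u, Red u ∧ Req v.1 (linv x :: u) := by
        rintro ⟨u, hu, hr⟩
        exact h ⟨u, hu, hwv.trans hr⟩
      show Req (act₀ x w).1 (act₀ x v).1
      unfold act₀
      refine (congrArg₂ Req (congrArg Subtype.val (dif_neg h : act₀ x w = ⟨x :: w.1, red_cons_of_not w.2 h⟩))
        (congrArg Subtype.val (dif_neg h' : act₀ x v = ⟨x :: v.1, red_cons_of_not v.2 h'⟩))).mpr ?_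
      show Req _ _
      exact hwv.cons x)

lemma act_mk_cons (x : L m) {w : List (L m)} (h1 : Red w) (h2 : Red (x :: w)) :
    act x (mkS w h1) = mkS (x :: w) h2 := by
  have hno : ¬ ∃ u, Red u ∧ Req w (linv x :: u) := by
    rintro ⟨u, hu, hr⟩
    exact h2.of_req (hr.cons x) (canc_pair x u)
  unfold act mkS
  exact congrArg (Quotient.mk _) (dif_neg hno : act₀ x ⟨w, h1⟩ = ⟨x :: w, red_cons_of_not h1 hno⟩)

lemma act_mk_uncons (x : L m) {w u : List (L m)} (hw : Red w) (hu : Red u)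
    (hr : Req w (linv x :: u)) : act x (mkS w hw) = mkS u hu := by
  have h : ∃ u, Red u ∧ Req w (linv x :: u) := ⟨u, hu, hr⟩
  unfold act mkS
  exact (congrArg (Quotient.mk _) (dif_pos h : act₀ x ⟨w, hw⟩ = ⟨h.choose, h.choose_spec.1⟩)).trans <|
    Quotient.sound (req_cancel (h.choose_spec.2.symm.trans hr))

lemma act_inv_act (x : L m) (s : S m) : act (linv x) (act x s) = s := by
  induction s using Quotient.ind with
  | _ w =>
    obtain ⟨w, hw⟩ := w
    show act (linv x) (act x (mkS w hw)) = mkS w hw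
    by_cases h : ∃ u, Red u ∧ Req w (linv x :: u)
    · obtain ⟨u, hu, hr⟩ := h
      rw [act_mk_uncons x hw hu hr]
      have h2 : Red (linv x :: u) := hw.of_req hr
      rw [act_mk_cons (linv x) hu h2]
      exact mk_eq_of_req hr.symm
    · have h2 : Red (x :: w) := red_cons_of_not hw h
      rw [act_mk_cons x hw h2]
      exact act_mk_uncons (linv x) h2 hw (by rw [linv_linv]; exact Req.refl _)
lemma linv_ne_of_fst {a b : L m} (h : a.1 ≠ b.1) : linv a ≠ b := by
  intro he; exact h (by rw [← he]; rfl)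

lemma ne_of_fst {a b : L m} (h : a.1 ≠ b.1) : a ≠ b := by
  intro he; exact h (by rw [he])

/-- The actions of letters with distinct underlying generators that commute, commute. -/
lemma act_comm {x y : L m} (hne : x.1 ≠ y.1) (hR : R x y) (s : S m) :
    act x (act y s) = act y (act x s) := by
  induction s using Quotient.ind with
  | _ w0 =>
    obtain ⟨w, hw⟩ := w0
    show act x (act y (mkS w hw)) = act y (act x (mkS w hw))
    have hRyx : R y x := hR.symm
    by_cases hA : ∃ u, Red u ∧ Req w (linv y :: u)
    · obtain ⟨w₁, hw₁, hr₁⟩ := hA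
      rw [act_mk_uncons y hw hw₁ hr₁]
      by_cases hB : ∃ u, Red u ∧ Req w₁ (linv x :: u)
      · obtain ⟨w₂, hw₂, hr₂⟩ := hB
        rw [act_mk_uncons x hw₁ hw₂ hr₂]
        -- w ≈ linv y :: linv x :: w₂ ≈ linv x :: linv y :: w₂
        have key : Req w (linv x :: linv y :: w₂) := by
          refine (hr₁.trans ((hr₂.cons (linv y)).trans ?_))
          exact Swp.req ⟨[], linv y, linv x, w₂, hRyx, rfl, rfl⟩
        have hred2 : Red (linv y :: w₂) := (hw.of_req key).of_cons
        rw [act_mk_uncons x hw hred2 key]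
        rw [act_mk_uncons y hred2 hw₂ (Req.refl _)]
      · -- pull-out of x fails for w as well
        have hC : ¬ ∃ u, Red u ∧ Req w (linv x :: u) := by
          rintro ⟨u, hu, hr⟩
          obtain ⟨w'', hRba, h1, h2⟩ :=
            req_extract_ne (ne_of_fst (show (linv y).1 ≠ (linv x).1 from fun h => hne h.symm))
              (hr₁.symm.trans hr)
          have hred'' : Red (linv x :: w'') := (hw₁.of_req h1)
          exact hB ⟨w'', hred''.of_cons, h1⟩
        have hxw : Red (x :: w) := red_cons_of_not hw hC
        rw [act_mk_cons x hw hxw]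
        have hx1 : Red (x :: w₁) := by
          have : Req (x :: w) (linv y :: x :: w₁) := by
            refine ((hr₁.cons x).trans ?_)
            exact Swp.req ⟨[], x, linv y, w₁, hR, rfl, rfl⟩
          exact (hxw.of_req this).of_cons
        rw [act_mk_cons x hw₁ hx1]
        have : Req (x :: w) (linv y :: x :: w₁) := by
          refine ((hr₁.cons x).trans ?_)
          exact Swp.req ⟨[], x, linv y, w₁, hR, rfl, rfl⟩
        rw [act_mk_uncons y hxw hx1 this]
    · have hyw : Red (y :: w) := red_cons_of_not hw hA
      rw [act_mk_cons y hw hyw]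
      by_cases hC : ∃ u, Red u ∧ Req w (linv x :: u)
      · obtain ⟨w₁, hw₁, hr₁⟩ := hC
        rw [act_mk_uncons x hw hw₁ hr₁]
        -- act y on w₁ must be a cons
        have hB : ¬ ∃ u, Red u ∧ Req w₁ (linv y :: u) := by
          rintro ⟨u, hu, hr⟩
          apply hA
          have hkey : Req w (linv y :: linv x :: u) :=
            hr₁.trans ((hr.cons (linv x)).trans
              (Swp.req ⟨[], linv x, linv y, u, hR, rfl, rfl⟩))
          exact ⟨linv x :: u, (hw.of_req hkey).of_cons, hkey⟩
        have hyw₁ : Red (y :: w₁) := red_cons_of_not hw₁ hB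
        rw [act_mk_cons y hw₁ hyw₁]
        have key : Req (y :: w) (linv x :: y :: w₁) := by
          refine ((hr₁.cons y).trans ?_)
          exact Swp.req ⟨[], y, linv x, w₁, hRyx, rfl, rfl⟩
        rw [act_mk_uncons x hyw hyw₁ key]
      · -- both act by cons
        have hD : ¬ ∃ u, Red u ∧ Req (y :: w) (linv x :: u) := by
          rintro ⟨u, hu, hr⟩
          obtain ⟨w'', hRba, h1, h2⟩ :=
            req_extract_ne (ne_of_fst (show y.1 ≠ (linv x).1 from fun h => hne h.symm)) hr
          exact hC ⟨w'', (hw.of_req h1).of_cons, h1⟩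
        have hE : ¬ ∃ u, Red u ∧ Req (x :: w) (linv y :: u) := by
          rintro ⟨u, hu, hr⟩
          obtain ⟨w'', hRba, h1, h2⟩ :=
            req_extract_ne (ne_of_fst (show x.1 ≠ (linv y).1 from hne)) hr
          exact hA ⟨w'', (hw.of_req h1).of_cons, h1⟩
        have hxw : Red (x :: w) := red_cons_of_not hw hC
        have hxyw : Red (x :: y :: w) := red_cons_of_not hyw hD
        have hyxw : Red (y :: x :: w) := red_cons_of_not hxw hE
        rw [act_mk_cons x hyw hxyw, act_mk_cons x hw hxw, act_mk_cons y hxw hyxw]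
        exact mk_eq_of_req (Swp.req ⟨[], x, y, w, hR, rfl, rfl⟩)
/-- The letter map into the group. -/
def toG (x : L m) : PathGroup m := cond x.2 (pathGen m x.1) (pathGen m x.1)⁻¹

lemma toG_linv (x : L m) : toG (linv x) = (toG x)⁻¹ := by
  rcases x with ⟨i, b⟩
  cases b <;> simp [toG, linv]

open scoped commutatorElement in
lemma pathGen_comm {i j : Fin m} (hij : (i : ℕ) + 1 = (j : ℕ)) :
    Commute (pathGen m i) (pathGen m j) := by
  rw [← commutatorElement_eq_one_iff_commute]
  have hr : (FreeGroup.of i * FreeGroup.of j * (FreeGroup.of i)⁻¹ * (FreeGroup.of j)⁻¹)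
      ∈ pathRels m := ⟨i, j, hij, rfl⟩
  have h1 : (QuotientGroup.mk (FreeGroup.of i * FreeGroup.of j * (FreeGroup.of i)⁻¹ *
      (FreeGroup.of j)⁻¹) : PathGroup m) = 1 := by
    rw [QuotientGroup.eq_one_iff]
    exact Subgroup.subset_normalClosure hr
  refine Eq.trans ?_ h1
  show (⁅pathGen m i, pathGen m j⁆ : PathGroup m)
      = (QuotientGroup.mk (FreeGroup.of i * FreeGroup.of j * (FreeGroup.of i)⁻¹ *
          (FreeGroup.of j)⁻¹) : PathGroup m)
  · simp [commutatorElement_def, pathGen, PresentedGroup.of, QuotientGroup.mk_mul,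
          QuotientGroup.mk_inv]
    rfl

lemma commute_toG_of_gen {x y : L m} (h : Commute (pathGen m x.1) (pathGen m y.1)) :
    Commute (toG x) (toG y) := by
  rcases x with ⟨i, b⟩
  rcases y with ⟨j, b'⟩
  simp only at h
  cases b <;> cases b'
  · exact h.inv_inv
  · exact h.inv_left
  · exact h.inv_right
  · exact h

lemma commute_toG_of_R {x y : L m} (h : R x y) : Commute (toG x) (toG y) := by
  apply commute_toG_of_gen
  rcases Nat.lt_trichotomy (x.1 : ℕ) (y.1 : ℕ) with hlt | heq | hgt
  · have : (x.1 : ℕ) + 1 = (y.1 : ℕ) := by obtain ⟨h1, h2⟩ := h; omega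
    exact pathGen_comm this
  · have : x.1 = y.1 := Fin.ext heq
    rw [this]
  · have : (y.1 : ℕ) + 1 = (x.1 : ℕ) := by obtain ⟨h1, h2⟩ := h; omega
    exact (pathGen_comm this).symm

/-- The permutation of `S m` associated to a generator. -/
noncomputable def fPerm (i : Fin m) : Equiv.Perm (S m) where
  toFun := act (i, true)
  invFun := act (i, false)
  left_inv := fun s => act_inv_act (i, true) s
  right_inv := fun s => act_inv_act (i, false) s

open scoped commutatorElement in
lemma relator_act_trivial :
    ∀ r ∈ pathRels m, FreeGroup.lift (fun i => fPerm i) r = 1 := by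
  rintro r ⟨i, j, hij, rfl⟩
  simp only [map_mul, map_inv, FreeGroup.lift_apply_of]
  rw [show fPerm i * fPerm j * (fPerm i)⁻¹ * (fPerm j)⁻¹ = ⁅fPerm i, fPerm j⁆ from rfl]
  rw [commutatorElement_eq_one_iff_commute]
  have hne : ((i, true) : L m).1 ≠ ((j, true) : L m).1 :=
    Fin.ne_of_val_ne (show (i : ℕ) ≠ (j : ℕ) by omega)
  have hR : R ((i, true) : L m) ((j, true) : L m) :=
    ⟨show (i : ℕ) ≤ (j : ℕ) + 1 by omega, show (j : ℕ) ≤ (i : ℕ) + 1 by omega⟩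
  ext s
  show act (i, true) (act (j, true) s) = act (j, true) (act (i, true) s)
  exact act_comm hne hR s

/-- The action of the whole group on `S m`. -/
noncomputable def alpha : PathGroup m →* Equiv.Perm (S m) :=
  PresentedGroup.toGroup relator_act_trivial

lemma alpha_toG_apply (x : L m) (s : S m) : alpha (toG x) s = act x s := by
  rcases x with ⟨i, b⟩
  cases b
  · show alpha (pathGen m i)⁻¹ s = _
    rw [map_inv]
    have h1 : alpha (pathGen m i) = fPerm i := PresentedGroup.toGroup.of relator_act_trivial
    rw [h1]
    rfl
  · show alpha (pathGen m i) s = _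
    have h1 : alpha (pathGen m i) = fPerm i := PresentedGroup.toGroup.of relator_act_trivial
    rw [h1]
    rfl

/-- The product in the group of a list of abstract letters. -/
def prodG (w : List (L m)) : PathGroup m := (w.map toG).prod

@[simp] lemma prodG_nil : prodG ([] : List (L m)) = 1 := rfl

lemma prodG_cons (x : L m) (w : List (L m)) : prodG (x :: w) = toG x * prodG w := by
  simp [prodG]

lemma eval_red (w : List (L m)) (h : Red w) :
    alpha (prodG w) (mkS [] Red.nil) = mkS w h := by
  induction w with
  | nil => simp
  | cons x t ih =>
    rw [prodG_cons, map_mul]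
    show alpha (toG x) (alpha (prodG t) (mkS [] Red.nil)) = _
    rw [ih h.of_cons, alpha_toG_apply]
    exact act_mk_cons x h.of_cons h

/-- The fundamental theorem: reduced words with the same product are swap equivalent. -/
lemma req_of_prodG_eq {w₁ w₂ : List (L m)} (h₁ : Red w₁) (h₂ : Red w₂)
    (h : prodG w₁ = prodG w₂) : Req w₁ w₂ := by
  have e1 := eval_red w₁ h₁
  have e2 := eval_red w₂ h₂
  rw [h, e2] at e1
  exact (req_of_mk_eq e1).symm
lemma red_single (a : L m) : Red [a] := by
  rintro ⟨u, v, hv, hu, -, -⟩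
  simp at hv; omega

lemma red_pair {a b : L m} (h : b ≠ linv a) : Red [a, b] := by
  rintro ⟨u, v, hv, hu, hinv, -⟩
  simp at hv
  have hu0 : u = 0 := by omega
  have hv1 : v = 1 := by omega
  subst hu0; subst hv1
  exact h (by simpa using hinv)

lemma req_singleton {a : L m} {w : List (L m)} (h : Req [a] w) : w = [a] := by
  induction h with
  | refl => rfl
  | tail ch st ih =>
    exfalso
    rw [ih] at st
    obtain ⟨p, x, y, q, -, h1, -⟩ := st
    apply_fun List.length at h1
    simp at h1
    omega

lemma req_pair {a b : L m} {w : List (L m)} (h : Req [a, b] w) :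
    w = [a, b] ∨ (R a b ∧ w = [b, a]) := by
  induction h with
  | refl => exact Or.inl rfl
  | tail ch st ih =>
    rcases ih with rfl | ⟨hRab, rfl⟩
    · obtain ⟨p, x, y, q, hR, h1, h2⟩ := st
      rcases p with _ | ⟨z, p'⟩
      · simp only [List.nil_append] at h1 h2
        obtain ⟨rfl, h3⟩ := List.cons_eq_cons.mp h1
        obtain ⟨rfl, h4⟩ := List.cons_eq_cons.mp h3
        rw [List.nil_eq, ← h4] at *
        exact Or.inr ⟨hR, by rw [h2, h4]⟩
      · exfalso
        apply_fun List.length at h1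
        simp at h1
        omega
    · obtain ⟨p, x, y, q, hR, h1, h2⟩ := st
      rcases p with _ | ⟨z, p'⟩
      · simp only [List.nil_append] at h1 h2
        obtain ⟨rfl, h3⟩ := List.cons_eq_cons.mp h1
        obtain ⟨rfl, h4⟩ := List.cons_eq_cons.mp h3
        exact Or.inl (by rw [h2, h4])
      · exfalso
        apply_fun List.length at h1
        simp at h1
        omega

lemma prodG_single (a : L m) : prodG [a] = toG a := by simp [prodG]

lemma toG_inj {a b : L m} (h : toG a = toG b) : a = b := by
  have hreq : Req [a] [b] :=
    req_of_prodG_eq (red_single a) (red_single b) (by rw [prodG_single, prodG_single, h])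
  have := req_singleton hreq
  exact (List.cons_eq_cons.mp this).1.symm

lemma toG_mul_eq_one {a b : L m} (h : toG a * toG b = 1) : b = linv a := by
  have h1 : toG b = (toG a)⁻¹ := (mul_eq_one_iff_inv_eq.mp h).symm
  rw [← toG_linv] at h1
  exact toG_inj h1

lemma R_of_fst_eq {a b : L m} (h : a.1 = b.1) : R a b := by
  have : (a.1 : ℕ) = (b.1 : ℕ) := by rw [h]
  exact ⟨by omega, by omega⟩

lemma commute_toG_iff_R {a b : L m} : Commute (toG a) (toG b) ↔ R a b := by
  constructor
  · intro hc
    by_contra hR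
    have hfst : a.1 ≠ b.1 := fun h => hR (R_of_fst_eq h)
    have h1 : b ≠ linv a := fun h => hfst (by rw [h]; rfl)
    have h2 : a ≠ linv b := fun h => hfst (by rw [h]; rfl)
    have hprod : prodG [a, b] = prodG [b, a] := by
      simp only [prodG, List.map_cons, List.map_nil, List.prod_cons, List.prod_nil, mul_one]
      exact hc.eq
    have hreq := req_of_prodG_eq (red_pair h1) (red_pair h2) hprod
    rcases req_pair hreq with heq | ⟨hRab, -⟩
    · obtain ⟨rfl, -⟩ := List.cons_eq_cons.mp heq
      exact hfst rfl
    · exact hR hRab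
  · exact commute_toG_of_R

lemma toG_mem_pathLetters (x : L m) : toG x ∈ pathLetters m := by
  rcases x with ⟨i, b⟩
  cases b
  · exact ⟨i, Or.inr rfl⟩
  · exact ⟨i, Or.inl rfl⟩

lemma exists_abstract {l : List (PathGroup m)} (h : ∀ x ∈ l, x ∈ pathLetters m) :
    ∃ w : List (L m), l = w.map toG := by
  induction l with
  | nil => exact ⟨[], rfl⟩
  | cons x t ih =>
    obtain ⟨w', hw'⟩ := ih (fun z hz => h z (List.mem_cons_of_mem _ hz))
    obtain ⟨i, hor⟩ := h x (List.mem_cons_self)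
    rcases hor with rfl | rfl
    · exact ⟨(i, true) :: w', by simp [hw']; rfl⟩
    · exact ⟨(i, false) :: w', by simp [hw']; rfl⟩

/-- Transfer of reducedness. -/
lemma isReducedWord_iff_red (w : List (L m)) : IsReducedWord (w.map toG) ↔ Red w := by
  constructor
  · intro hir
    rintro ⟨u, v, hv, hu, hinv, hbet⟩
    have hu' : u < (w.map toG).length := by simp; omega
    have hv' : v < (w.map toG).length := by simp; omega
    obtain ⟨t, ht1, ht2, ht3⟩ := hir ⟨u, hu'⟩ ⟨v, hv'⟩ (by simpa using hu) (by
      simp only [List.get_eq_getElem, List.getElem_map]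
      rw [hinv, toG_linv, mul_inv_cancel])
    apply ht3
    simp only [List.get_eq_getElem, List.getElem_map]
    exact commute_toG_of_R (hbet t (by have := t.isLt; simp at this; omega)
      (by exact ht1) (by exact ht2)).symm |>.symm
  · intro hred u v huv hprod
    by_contra hno
    push_neg at hno
    apply hred
    have hu : (u : ℕ) < w.length := by have := u.isLt; simpa using this
    have hv : (v : ℕ) < w.length := by have := v.isLt; simpa using this
    refine ⟨u, v, hv, huv, ?_, ?_⟩
    · apply toG_mul_eq_one
      simpa only [List.get_eq_getElem, List.getElem_map] using hprod
    · intro t ht h1 h2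
      have hcomm := hno ⟨t, by simpa using ht⟩ (by exact h1) (by exact h2)
      simp only [List.get_eq_getElem, List.getElem_map] at hcomm
      exact commute_toG_iff_R.mp hcomm

lemma swp_map_swapStep {a b : List (L m)} (h : Swp a b) :
    SwapStep (a.map toG) (b.map toG) := by
  obtain ⟨p, x, y, q, hR, rfl, rfl⟩ := h
  exact ⟨p.map toG, q.map toG, toG x, toG y, commute_toG_of_R hR, by simp, by simp⟩

lemma swapStep_prod_eq {l₁ l₂ : List (PathGroup m)} (h : SwapStep l₁ l₂) :
    l₁.prod = l₂.prod := by
  obtain ⟨a, b, x, y, hxy, rfl, rfl⟩ := h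
  simp only [List.prod_append, List.prod_cons]
  rw [← mul_assoc x y, hxy.eq, mul_assoc]

lemma swapStep_length_eq {l₁ l₂ : List (PathGroup m)} (h : SwapStep l₁ l₂) :
    l₁.length = l₂.length := by
  obtain ⟨a, b, x, y, -, rfl, rfl⟩ := h
  simp

lemma exists_prodG (g : PathGroup m) : ∃ w : List (L m), prodG w = g := by
  obtain ⟨z, rfl⟩ := QuotientGroup.mk'_surjective (Subgroup.normalClosure (pathRels m)) g
  simp only [QuotientGroup.mk'_apply]
  induction z using FreeGroup.induction_on with
  | C1 => exact ⟨[], rfl⟩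
  | of i => exact ⟨[(i, true)], by rw [prodG_single]; rfl⟩
  | inv_of i _ =>
    exact ⟨[(i, false)], by rw [prodG_single]; show (pathGen m i)⁻¹ = _; rfl⟩
  | mul z₁ z₂ ih₁ ih₂ =>
    obtain ⟨w₁, hw₁⟩ := ih₁
    obtain ⟨w₂, hw₂⟩ := ih₂
    refine ⟨w₁ ++ w₂, ?_⟩
    simp only [prodG, List.map_append, List.prod_append]
    rw [show (QuotientGroup.mk (z₁ * z₂) : PathGroup m) = QuotientGroup.mk z₁ *
      QuotientGroup.mk z₂ from rfl, ← hw₁, ← hw₂]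
    rfl

/-- Every word can be shortened to a reduced one with the same product. -/
lemma exists_red_of_word : ∀ (n : ℕ) (w : List (L m)), w.length ≤ n →
    ∃ w', Red w' ∧ prodG w' = prodG w := by
  intro n
  induction n with
  | zero =>
    intro w hw
    have hnil : w = [] := List.eq_nil_of_length_eq_zero (by omega)
    subst hnil
    exact ⟨[], Red.nil, rfl⟩
  | succ n ih =>
    intro w hw
    by_cases hred : Red w
    · exact ⟨w, hred, rfl⟩
    · rw [Red, not_not] at hred
      obtain ⟨u, v, hv, hu, hinv, hbet⟩ := hred
      obtain ⟨hdec, hq⟩ := canc_decomp_at hv hu hinv hbet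
      set x := w[u]'(hu.trans hv) with hxd
      set p := w.take u with hpd
      set q := (w.drop (u+1)).take (v - (u+1)) with hqd
      set r := w.drop (v+1) with hrd
      have hlen : (p ++ (q ++ r)).length ≤ n := by
        apply_fun List.length at hdec
        simp only [List.length_append, List.length_cons] at hdec
        simp only [List.length_append]
        omega
      obtain ⟨w', hw', hp'⟩ := ih (p ++ (q ++ r)) hlen
      refine ⟨w', hw', ?_⟩
      rw [hp', hdec]
      have hcomm : Commute (toG x) ((q.map toG).prod) := by
        apply Commute.list_prod_right
        intro z hz
        obtain ⟨z', hz', rfl⟩ := List.mem_map.mp hz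
        exact (commute_toG_of_R (hq z' hz')).symm
      simp only [prodG, List.map_append, List.prod_append, List.map_cons, List.prod_cons]
      rw [toG_linv, ← mul_assoc (toG x), hcomm.eq]
      group

lemma prod_map_toG (w : List (L m)) : (w.map toG).prod = prodG w := rfl

lemma swapChain_prod_eq {l₁ l₂ : List (PathGroup m)}
    (h : Relation.ReflTransGen SwapStep l₁ l₂) : l₁.prod = l₂.prod := by
  induction h with
  | refl => rfl
  | tail ch st ih => exact ih.trans (swapStep_prod_eq st)

end Stmt17

open Stmt17

/-- Solution of the word problem in `G = ⟨g_1,…,g_m ∣ [g_i,g_{i+1}]=1⟩`: every element is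
represented by a reduced word; two reduced words represent the same element iff they are
related by a finite sequence of swaps of adjacent commuting letters; in particular the length
of a reduced word representing a given element is well defined. -/
theorem stmt17 (m : ℕ) (hm : 1 ≤ m) :
    (∀ g : PathGroup m, ∃ l : List (PathGroup m),
      (∀ x ∈ l, x ∈ pathLetters m) ∧ IsReducedWord l ∧ l.prod = g) ∧
    (∀ l₁ l₂ : List (PathGroup m),
      (∀ x ∈ l₁, x ∈ pathLetters m) → (∀ x ∈ l₂, x ∈ pathLetters m) →
      IsReducedWord l₁ → IsReducedWord l₂ →
      (l₁.prod = l₂.prod ↔ Relation.ReflTransGen SwapStep l₁ l₂)) ∧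
    (∀ l₁ l₂ : List (PathGroup m),
      (∀ x ∈ l₁, x ∈ pathLetters m) → (∀ x ∈ l₂, x ∈ pathLetters m) →
      IsReducedWord l₁ → IsReducedWord l₂ →
      l₁.prod = l₂.prod → l₁.length = l₂.length) := by
  refine ⟨?_, ?_, ?_⟩
  · intro g
    obtain ⟨w0, hw0⟩ := exists_prodG g
    obtain ⟨w, hred, hprod⟩ := exists_red_of_word w0.length w0 le_rfl
    refine ⟨w.map toG, ?_, ?_, ?_⟩
    · intro x hx
      obtain ⟨z, hz, rfl⟩ := List.mem_map.mp hx
      exact toG_mem_pathLetters z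
    · exact (isReducedWord_iff_red w).mpr hred
    · rw [prod_map_toG, hprod, hw0]
  · intro l₁ l₂ h₁ h₂ hr₁ hr₂
    obtain ⟨w₁, hw₁e⟩ := exists_abstract h₁
    obtain ⟨w₂, hw₂e⟩ := exists_abstract h₂
    subst hw₁e; subst hw₂e
    constructor
    · intro hp
      have hreq := req_of_prodG_eq ((isReducedWord_iff_red w₁).mp hr₁)
        ((isReducedWord_iff_red w₂).mp hr₂) hp
      exact Relation.ReflTransGen.lift (List.map toG)
        (fun a b h => swp_map_swapStep h) _ _ hreq
    · intro hchain
      exact swapChain_prod_eq hchain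
  · intro l₁ l₂ h₁ h₂ hr₁ hr₂ hp
    obtain ⟨w₁, hw₁e⟩ := exists_abstract h₁
    obtain ⟨w₂, hw₂e⟩ := exists_abstract h₂
    subst hw₁e; subst hw₂e
    have hreq := req_of_prodG_eq ((isReducedWord_iff_red w₁).mp hr₁)
      ((isReducedWord_iff_red w₂).mp hr₂) hp
    simpa using hreq.length_eq
end
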